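/- arXiv:2603.29809 — 4 statements merged into one kernel-verified Lean document; each statement's English description precedes it below -/
import Mathlib

section
/- Let λ : Fin N → ℝ satisfy ∑_s λ_s = 0 and the hypercontractivity-type bound M₄ ≤ 9^k · M₂², where M_p = (1/N)∑_s λ_s^p and M₂ > 0. Then the fraction of pairs (r,s) with |λ_r - λ_s| ≥ √M₂ is at least 1/(3·9^k); i.e., (1/N²)·#{(r,s) : |λ_r-λ_s| ≥ √M₂} ≥ 1/(3·9^k). -/
/-- Spectral spreading: under the hypercontractivity-type moment bound, a constant
fraction of eigenvalue pairs is separated by at least `√M₂`. -/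
theorem spectral_spreading {N : ℕ} (hN : 1 ≤ N) (k : ℕ) (hk : 1 ≤ k)
    (lam : Fin N → ℝ) (hsum : ∑ s : Fin N, lam s = 0)
    (M₂ M₄ : ℝ)
    (hM₂ : M₂ = (1 / (N : ℝ)) * ∑ s : Fin N, (lam s) ^ 2)
    (hM₄ : M₄ = (1 / (N : ℝ)) * ∑ s : Fin N, (lam s) ^ 4)
    (hM₂pos : 0 < M₂)
    (hBonami : M₄ ≤ 9 ^ k * M₂ ^ 2) :
    1 / (3 * 9 ^ k) ≤
      (1 / (N : ℝ) ^ 2) *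
        (Nat.card {p : Fin N × Fin N | Real.sqrt M₂ ≤ |lam p.1 - lam p.2|}) := by
  have hNpos : (0:ℝ) < N := by exact_mod_cast Nat.lt_of_lt_of_le Nat.zero_lt_one hN
  set A := ∑ s : Fin N, lam s ^ 2 with hA
  set B := ∑ s : Fin N, lam s ^ 4 with hB
  set C := ∑ s : Fin N, lam s ^ 3 with hC
  have hAeq : A = N * M₂ := by rw [hM₂]; field_simp
  have hBeq : B = N * M₄ := by rw [hM₄]; field_simp
  -- sum of squared differences over all pairs
  have T2 : ∑ p : Fin N × Fin N, (lam p.1 - lam p.2)^2 = 2*N*A := by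
    rw [Fintype.sum_prod_type]
    have h1 : ∀ r : Fin N, ∑ s : Fin N, (lam r - lam s)^2 = N * lam r ^ 2 + A := by
      intro r
      have : ∑ s : Fin N, (lam r - lam s)^2
          = ∑ s : Fin N, (lam r ^ 2 - 2 * (lam r * lam s) + lam s ^ 2) :=
        Finset.sum_congr rfl fun s _ => by ring
      rw [this, Finset.sum_add_distrib, Finset.sum_sub_distrib, ← Finset.mul_sum,
        ← Finset.mul_sum, hsum, Finset.sum_const, Finset.card_univ, Fintype.card_fin]
      ring
    rw [Finset.sum_congr rfl fun r _ => h1 r, Finset.sum_add_distrib, ← Finset.mul_sum,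
      Finset.sum_const, Finset.card_univ, Fintype.card_fin]
    push_cast
    ring
  -- sum of fourth powers of differences over all pairs
  have T4 : ∑ p : Fin N × Fin N, ((lam p.1 - lam p.2)^2)^2 = 2*N*B + 6*A^2 := by
    rw [Fintype.sum_prod_type]
    have h1 : ∀ r : Fin N, ∑ s : Fin N, ((lam r - lam s)^2)^2
        = N * lam r ^ 4 + 6 * A * lam r ^ 2 - 4 * C * lam r + B := by
      intro r
      have : ∑ s : Fin N, ((lam r - lam s)^2)^2
          = ∑ s : Fin N, (lam r ^ 4 - 4 * lam r ^ 3 * lam s + 6 * lam r ^ 2 * lam s ^ 2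
              - 4 * lam r * lam s ^ 3 + lam s ^ 4) :=
        Finset.sum_congr rfl fun s _ => by ring
      rw [this]
      rw [Finset.sum_add_distrib, Finset.sum_sub_distrib, Finset.sum_add_distrib,
        Finset.sum_sub_distrib, ← Finset.mul_sum, ← Finset.mul_sum, ← Finset.mul_sum,
        hsum, Finset.sum_const, Finset.card_univ, Fintype.card_fin]
      ring
    rw [Finset.sum_congr rfl fun r _ => h1 r]
    rw [Finset.sum_add_distrib, Finset.sum_sub_distrib, Finset.sum_add_distrib,
      ← Finset.mul_sum, ← Finset.mul_sum, ← Finset.mul_sum, hsum,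
      Finset.sum_const, Finset.card_univ, Fintype.card_fin]
    push_cast
    ring
  -- the large-difference pair set
  set S : Finset (Fin N × Fin N) :=
    Finset.univ.filter (fun p : Fin N × Fin N => M₂ ≤ (lam p.1 - lam p.2)^2) with hS
  -- identify Nat.card of the set with S.card
  have hsetS : {p : Fin N × Fin N | Real.sqrt M₂ ≤ |lam p.1 - lam p.2|} = ↑S := by
    ext p
    simp only [Set.mem_setOf_eq, hS, Finset.coe_filter, Finset.mem_univ, true_and]
    rw [← Real.sqrt_sq_eq_abs]
    constructor
    · intro h
      have := Real.sq_sqrt hM₂pos.le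
      nlinarith [Real.sqrt_nonneg ((lam p.1 - lam p.2)^2), Real.sq_sqrt (sq_nonneg (lam p.1 - lam p.2)), Real.sqrt_nonneg M₂]
    · exact Real.sqrt_le_sqrt
  -- lower bound on the sum over S of squared differences
  have hlow : (N:ℝ)^2 * M₂ ≤ ∑ p ∈ S, (lam p.1 - lam p.2)^2 := by
    have hsplit : ∑ p : Fin N × Fin N, (lam p.1 - lam p.2)^2
        = ∑ p ∈ S, (lam p.1 - lam p.2)^2 + ∑ p ∈ Sᶜ, (lam p.1 - lam p.2)^2 :=
      (Finset.sum_add_sum_compl S _).symm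
    have hcompl : ∑ p ∈ Sᶜ, (lam p.1 - lam p.2)^2 ≤ (N:ℝ)^2 * M₂ := by
      calc ∑ p ∈ Sᶜ, (lam p.1 - lam p.2)^2 ≤ ∑ _p ∈ Sᶜ, M₂ := by
            apply Finset.sum_le_sum
            intro p hp
            simp only [hS, Finset.mem_compl, Finset.mem_filter, Finset.mem_univ,
              true_and, not_le] at hp
            exact hp.le
        _ = Sᶜ.card * M₂ := by rw [Finset.sum_const, nsmul_eq_mul]
        _ ≤ (N:ℝ)^2 * M₂ := by
            apply mul_le_mul_of_nonneg_right _ hM₂pos.le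
            have : Sᶜ.card ≤ Fintype.card (Fin N × Fin N) := Finset.card_le_univ _
            have h2 : (Sᶜ.card : ℝ) ≤ (N:ℝ)^2 := by
              have := this
              simp only [Fintype.card_prod, Fintype.card_fin] at this
              calc (Sᶜ.card : ℝ) ≤ ((N*N : ℕ) : ℝ) := by exact_mod_cast this
                _ = (N:ℝ)^2 := by push_cast; ring
            exact h2
    have hT2' : ∑ p : Fin N × Fin N, (lam p.1 - lam p.2)^2 = 2 * (N:ℝ)^2 * M₂ := by
      rw [T2, hAeq]; ring
    linarith [hsplit, hcompl, hT2']
  -- upper bound on sum over S of fourth powers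
  have hup : ∑ p ∈ S, ((lam p.1 - lam p.2)^2)^2 ≤ 2*(N:ℝ)^2*M₄ + 6*(N:ℝ)^2*M₂^2 := by
    have h1 : ∑ p ∈ S, ((lam p.1 - lam p.2)^2)^2
        ≤ ∑ p : Fin N × Fin N, ((lam p.1 - lam p.2)^2)^2 := by
      apply Finset.sum_le_sum_of_subset_of_nonneg (Finset.subset_univ S)
      intro p _ _; positivity
    rw [T4, hAeq, hBeq] at h1
    nlinarith [h1]
  -- Cauchy–Schwarz
  have hCS : (∑ p ∈ S, (lam p.1 - lam p.2)^2)^2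
      ≤ (S.card : ℝ) * ∑ p ∈ S, ((lam p.1 - lam p.2)^2)^2 := by
    have := Finset.sum_mul_sq_le_sq_mul_sq S (fun _ => (1:ℝ))
      (fun p => (lam p.1 - lam p.2)^2)
    simpa using this
  -- numeric facts
  have h9 : (6:ℝ) ≤ 9 ^ k := by
    calc (6:ℝ) ≤ 9^1 := by norm_num
      _ ≤ 9^k := pow_le_pow_right₀ (by norm_num) hk
  have h9pos : (0:ℝ) < 9 ^ k := by positivity
  have hcard : (N:ℝ)^2 ≤ 3 * 9^k * S.card := by
    have hlow' : ((N:ℝ)^2 * M₂)^2 ≤ (∑ p ∈ S, (lam p.1 - lam p.2)^2)^2 := by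
      apply sq_le_sq'
      · nlinarith [hlow, sq_nonneg ((N:ℝ)*M₂)]
      · exact hlow
    have key : ((N:ℝ)^2 * M₂)^2 ≤ (S.card : ℝ) * (2*(N:ℝ)^2*M₄ + 6*(N:ℝ)^2*M₂^2) := by
      have hSnn : (0:ℝ) ≤ S.card := Nat.cast_nonneg _
      calc ((N:ℝ)^2 * M₂)^2 ≤ (∑ p ∈ S, (lam p.1 - lam p.2)^2)^2 := hlow'
        _ ≤ (S.card : ℝ) * ∑ p ∈ S, ((lam p.1 - lam p.2)^2)^2 := hCS
        _ ≤ (S.card : ℝ) * (2*(N:ℝ)^2*M₄ + 6*(N:ℝ)^2*M₂^2) :=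
            mul_le_mul_of_nonneg_left hup hSnn
    -- 2M₄ + 6M₂² ≤ 3·9^k·M₂²
    have hbd : 2*M₄ + 6*M₂^2 ≤ 3 * 9^k * M₂^2 := by nlinarith [hBonami, sq_nonneg M₂]
    have hSnn : (0:ℝ) ≤ S.card := Nat.cast_nonneg _
    have key3 : (N:ℝ)^2 * ((N:ℝ)^2 * M₂^2) ≤ (3 * 9^k * S.card) * ((N:ℝ)^2 * M₂^2) := by
      calc (N:ℝ)^2 * ((N:ℝ)^2 * M₂^2) = ((N:ℝ)^2 * M₂)^2 := by ring
        _ ≤ (S.card : ℝ) * (2*(N:ℝ)^2*M₄ + 6*(N:ℝ)^2*M₂^2) := key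
        _ = (S.card : ℝ) * (N:ℝ)^2 * (2*M₄ + 6*M₂^2) := by ring
        _ ≤ (S.card : ℝ) * (N:ℝ)^2 * (3 * 9^k * M₂^2) :=
            mul_le_mul_of_nonneg_left hbd (mul_nonneg hSnn (sq_nonneg (N:ℝ)))
        _ = (3 * 9^k * S.card) * ((N:ℝ)^2 * M₂^2) := by ring
    exact le_of_mul_le_mul_right key3 (by positivity)
  -- conclude
  rw [hsetS, Nat.card_coe_set_eq, Set.ncard_coe_finset]
  rw [div_le_iff₀ (by positivity : (0:ℝ) < 3 * 9^k)]
  have hN2 : (0:ℝ) < (N:ℝ)^2 := by positivity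
  have hinv : (1/(N:ℝ)^2) * (N:ℝ)^2 = 1 := by field_simp
  have h1 : (1/(N:ℝ)^2) * ((N:ℝ)^2) ≤ (1/(N:ℝ)^2) * (3 * 9^k * S.card) :=
    mul_le_mul_of_nonneg_left hcard (le_of_lt (one_div_pos.mpr hN2))
  rw [hinv] at h1
  calc (1:ℝ) ≤ (1/(N:ℝ)^2) * (3 * 9^k * S.card) := h1
    _ = 1 / (N:ℝ)^2 * (S.card) * (3 * 9^k) := by ring
end

section
/- Let λ : Fin N → ℝ, ε > 0, Λ = (1/N²)·#{(r,s) : |λ_r - λ_s| ≥ ε}, and define I(t) = (1/N²) ∑_{r,s} cos((λ_r - λ_s)·t). If t is drawn uniformly from [0, 2/ε], then with probability at least 1/3, I(t) ≤ 1 - Λ/4. -/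
open MeasureTheory Real Set

noncomputable def gpos : ℝ → ℝ := fun x => max (Real.cos x) 0

lemma gpos_cont : Continuous gpos := Real.continuous_cos.max continuous_const

lemma gpos_int (a b : ℝ) : IntervalIntegrable gpos volume a b :=
  gpos_cont.intervalIntegrable a b

lemma gpos_nonneg (x : ℝ) : 0 ≤ gpos x := le_max_right _ _

noncomputable def F (L : ℝ) : ℝ := ∫ x in (0:ℝ)..L, gpos x

lemma F_mono {a b : ℝ} (h : a ≤ b) : F a ≤ F b := by
  have h1 : F b = F a + ∫ x in a..b, gpos x :=
    (intervalIntegral.integral_add_adjacent_intervals (gpos_int 0 a) (gpos_int a b)).symm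
  have h2 : 0 ≤ ∫ x in a..b, gpos x :=
    intervalIntegral.integral_nonneg h (fun u _ => gpos_nonneg u)
  rw [h1]; linarith

lemma F_three_pi_div_two : F (3*π/2) = 1 := by
  have hpi := Real.pi_pos
  have h1 : (0:ℝ) ≤ π/2 := by positivity
  have h2 : π/2 ≤ 3*π/2 := by linarith
  have e1 : (∫ x in (0:ℝ)..(π/2), gpos x) = ∫ x in (0:ℝ)..(π/2), Real.cos x := by
    apply intervalIntegral.integral_congr
    intro x hx
    rw [Set.uIcc_of_le h1] at hx
    exact max_eq_left (Real.cos_nonneg_of_mem_Icc ⟨by linarith [hx.1], hx.2⟩)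
  have e2 : (∫ x in (π/2)..(3*π/2), gpos x) = ∫ x in (π/2)..(3*π/2), (0:ℝ) := by
    apply intervalIntegral.integral_congr
    intro x hx
    rw [Set.uIcc_of_le h2] at hx
    exact max_eq_right
      (Real.cos_nonpos_of_pi_div_two_le_of_le hx.1 (by linarith [hx.2]))
  have : F (3*π/2) = (∫ x in (0:ℝ)..(π/2), gpos x) + ∫ x in (π/2)..(3*π/2), gpos x :=
    (intervalIntegral.integral_add_adjacent_intervals (gpos_int _ _) (gpos_int _ _)).symm
  rw [this, e1, e2, integral_cos]
  simp

lemma F_two_pi : F (2*π) = 2 := by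
  have hpi := Real.pi_pos
  have e3 : (∫ x in (3*π/2)..(2*π), gpos x) = ∫ x in (3*π/2)..(2*π), Real.cos x := by
    apply intervalIntegral.integral_congr
    intro x hx
    rw [Set.uIcc_of_le (by linarith : 3*π/2 ≤ 2*π)] at hx
    have : Real.cos (x - 2*π) = Real.cos x := Real.cos_sub_two_pi x
    refine max_eq_left ?_
    rw [← this]
    exact Real.cos_nonneg_of_mem_Icc ⟨by linarith [hx.1], by linarith [hx.2]⟩
  have : F (2*π) = F (3*π/2) + ∫ x in (3*π/2)..(2*π), gpos x :=
    (intervalIntegral.integral_add_adjacent_intervals (gpos_int _ _) (gpos_int _ _)).symm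
  rw [this, F_three_pi_div_two, e3, integral_cos]
  have hs1 : Real.sin (2*π) = 0 := Real.sin_two_pi
  have hs2 : Real.sin (3*π/2) = -1 := by
    have : (3:ℝ)*π/2 = π + π/2 := by ring
    rw [this, Real.sin_add]
    simp
  rw [hs1, hs2]; ring

lemma F_split (L : ℝ) : F L = F (2*π) + F (L - 2*π) := by
  have h1 : F L = F (2*π) + ∫ x in (2*π)..L, gpos x :=
    (intervalIntegral.integral_add_adjacent_intervals (gpos_int _ _) (gpos_int _ _)).symm
  have h2 : (∫ x in (0:ℝ)..(L - 2*π), gpos (x + 2*π)) = ∫ x in (2*π)..L, gpos x := by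
    rw [intervalIntegral.integral_comp_add_right]
    norm_num
  have h3 : (∫ x in (0:ℝ)..(L - 2*π), gpos (x + 2*π)) = F (L - 2*π) := by
    unfold F
    apply intervalIntegral.integral_congr
    intro x _
    simp only [gpos, Real.cos_add_two_pi]
  rw [h1, ← h2, h3]

lemma F_le_aux : ∀ n : ℕ, ∀ L : ℝ, 2 ≤ L → L ≤ 2*π*(n+1) → F L ≤ L/2 := by
  intro n
  induction n with
  | zero =>
    intro L hL hU
    have hpi := Real.pi_gt_three
    by_cases h : L ≤ 3*π/2
    · have := F_mono h
      rw [F_three_pi_div_two] at this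
      linarith
    · push_neg at h
      have h2 : L ≤ 2*π := by push_cast at hU; linarith
      have := F_mono h2
      rw [F_two_pi] at this
      linarith
  | succ n ih =>
    intro L hL hU
    have hpi := Real.pi_gt_three
    by_cases h : L ≤ 2*π*(n+1)
    · exact ih L hL h
    · push_neg at h
      have hn0 : (0:ℝ) ≤ (n:ℝ) := Nat.cast_nonneg n
      have hL2π : 2*π ≤ L := by nlinarith
      rw [F_split L]
      rw [F_two_pi]
      by_cases h2 : 2 ≤ L - 2*π
      · have := ih (L - 2*π) h2 (by push_cast at hU ⊢; linarith)
        linarith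
      · push_neg at h2
        have := F_mono (by linarith : L - 2*π ≤ 3*π/2)
        rw [F_three_pi_div_two] at this
        linarith

lemma F_le {L : ℝ} (hL : 2 ≤ L) : F L ≤ L / 2 := by
  apply F_le_aux ⌊L⌋₊ L hL
  have h1 : L < ⌊L⌋₊ + 1 := Nat.lt_floor_add_one L
  have hpi := Real.pi_gt_three
  have : (0:ℝ) ≤ (⌊L⌋₊:ℝ) := Nat.cast_nonneg _
  nlinarith

lemma int_gpos_le {δ ε : ℝ} (hε : 0 < ε) (hδ : ε ≤ |δ|) :
    (∫ t in (0:ℝ)..(2/ε), max (Real.cos (δ * t)) 0) ≤ 1/ε := by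
  set d := |δ| with hd
  have hd0 : 0 < d := lt_of_lt_of_le hε hδ
  have heq : (fun t => max (Real.cos (δ * t)) 0) = fun t => gpos (d * t) := by
    funext t
    unfold gpos
    rcases abs_cases δ with ⟨h1, _⟩ | ⟨h1, _⟩
    · rw [hd, h1]
    · rw [hd, h1, neg_mul, Real.cos_neg]
  rw [heq]
  rw [intervalIntegral.integral_comp_mul_left gpos (ne_of_gt hd0)]
  rw [mul_zero, smul_eq_mul]
  have hL : 2 ≤ d * (2/ε) := by
    have h1 : ε * (2/ε) ≤ d * (2/ε) :=
      mul_le_mul_of_nonneg_right hδ (by positivity)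
    have h2 : ε * (2/ε) = 2 := by field_simp
    linarith
  have := F_le hL
  have hFnn : 0 ≤ F (d * (2/ε)) := by
    have := F_mono (by linarith : (0:ℝ) ≤ d * (2/ε))
    have hF0 : F 0 = 0 := by unfold F; simp
    linarith
  calc d⁻¹ * F (d * (2/ε)) ≤ d⁻¹ * (d * (2/ε) / 2) := by
        apply mul_le_mul_of_nonneg_left this (by positivity)
    _ = 1/ε := by field_simp


/-- Spectral condition lemma: for `t` uniform in `[0, 2/ε]`, with probability at least
`1/3` the Bell identity probability `I(t)` is at most `1 - Λ/4`. -/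
theorem spectral_condition {N : ℕ} (hN : 0 < N) (lam : Fin N → ℝ) (ε : ℝ) (hε : 0 < ε)
    (Λ : ℝ)
    (hΛ : Λ = (1 / (N : ℝ) ^ 2) *
      (Nat.card {p : Fin N × Fin N | ε ≤ |lam p.1 - lam p.2|}))
    (I : ℝ → ℝ)
    (hI : ∀ t, I t = (1 / (N : ℝ) ^ 2) *
      ∑ r : Fin N, ∑ s : Fin N, Real.cos ((lam r - lam s) * t)) :
    ENNReal.ofReal ((1 / 3) * (2 / ε)) ≤
      volume {t : ℝ | t ∈ Set.Icc 0 (2 / ε) ∧ I t ≤ 1 - Λ / 4} := by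
  classical
  set T : ℝ := 2/ε with hTdef
  have hT0 : 0 < T := by positivity
  have hN2 : (0:ℝ) < (N:ℝ)^2 := by positivity
  set pred : Fin N × Fin N → Prop := fun p => ε ≤ |lam p.1 - lam p.2| with hpreddef
  set P : Finset (Fin N × Fin N) := Finset.univ.filter pred with hPdef
  have hKcard : (Nat.card {p : Fin N × Fin N | pred p}) = P.card := by
    rw [Nat.card_coe_set_eq, Set.ncard_eq_toFinset_card']
    simp [hPdef]
  rw [hKcard] at hΛ
  set K : ℕ := P.card with hKdef
  set Pc : Finset (Fin N × Fin N) := Finset.univ.filter (fun p => ¬ pred p) with hPcdef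
  have hcards : K + Pc.card = N^2 := by
    rw [hKdef, hPdef, hPcdef, Finset.card_filter_add_card_filter_not]
    simp [sq]
  have hcardcR : (Pc.card : ℝ) = (N:ℝ)^2 - K := by
    have : ((K + Pc.card : ℕ) : ℝ) = ((N^2 : ℕ) : ℝ) := by rw [hcards]
    push_cast at this
    linarith
  -- sum decomposition
  have hsum : ∀ t : ℝ, (∑ r : Fin N, ∑ s : Fin N, Real.cos ((lam r - lam s) * t))
      = (∑ p ∈ P, Real.cos ((lam p.1 - lam p.2) * t))
        + ∑ p ∈ Pc, Real.cos ((lam p.1 - lam p.2) * t) := by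
    intro t
    rw [← Fintype.sum_prod_type' (f := fun r s => Real.cos ((lam r - lam s) * t))]
    rw [hPdef, hPcdef, Finset.sum_filter_add_sum_filter_not]
  clear_value P K Pc
  by_cases hK0 : K = 0
  · -- Λ = 0, the set is all of Icc 0 T
    have hΛ0 : Λ = 0 := by rw [hΛ, hK0]; simp
    have hIone : ∀ t, I t ≤ 1 - Λ/4 := by
      intro t
      rw [hΛ0, hI t]
      have hb : (∑ r : Fin N, ∑ s : Fin N, Real.cos ((lam r - lam s) * t))
          ≤ (N:ℝ)^2 := by
        calc (∑ r : Fin N, ∑ s : Fin N, Real.cos ((lam r - lam s) * t))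
            ≤ ∑ _r : Fin N, ∑ _s : Fin N, (1:ℝ) :=
              Finset.sum_le_sum (fun r _ => Finset.sum_le_sum (fun s _ => Real.cos_le_one _))
          _ = (N:ℝ)^2 := by simp [sq]
      have h2 : (1/(N:ℝ)^2) * (∑ r : Fin N, ∑ s : Fin N, Real.cos ((lam r - lam s) * t))
          ≤ (1/(N:ℝ)^2) * (N:ℝ)^2 := mul_le_mul_of_nonneg_left hb (by positivity)
      have h3 : (1/(N:ℝ)^2) * (N:ℝ)^2 = 1 := by field_simp
      linarith
    have hseteq : {t : ℝ | t ∈ Set.Icc 0 T ∧ I t ≤ 1 - Λ/4} = Set.Icc 0 T := by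
      ext t
      simp only [Set.mem_setOf_eq, and_iff_left_iff_imp]
      exact fun _ => hIone t
    rw [hseteq, Real.volume_Icc]
    apply ENNReal.ofReal_le_ofReal
    linarith
  · have hKpos : 0 < K := Nat.pos_of_ne_zero hK0
    have hKR : (0:ℝ) < K := by exact_mod_cast hKpos
    have hIfun : I = fun t => (1 / (N : ℝ) ^ 2) *
        ∑ r : Fin N, ∑ s : Fin N, Real.cos ((lam r - lam s) * t) := funext hI
    have hIcont : Continuous I := by
      rw [hIfun]
      exact continuous_const.mul (continuous_finset_sum _ fun r _ =>
        continuous_finset_sum _ fun s _ =>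
          Real.continuous_cos.comp (continuous_const.mul continuous_id))
    set B : Set ℝ := Set.Icc 0 T ∩ {t | 1 - Λ/4 < I t} with hBdef
    clear_value B
    have hBmeas : MeasurableSet B := by
      rw [hBdef]
      exact measurableSet_Icc.inter (isOpen_lt continuous_const hIcont).measurableSet
    have hBsub : B ⊆ Set.Icc 0 T := by
      rw [hBdef]
      exact Set.inter_subset_left
    have hfin : volume B ≠ ⊤ := by
      apply ne_top_of_le_ne_top _ (measure_mono hBsub)
      rw [Real.volume_Icc]
      exact ENNReal.ofReal_ne_top
    set W : ℝ → ℝ := fun t =>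
      (4/(3*(K:ℝ))) * ∑ p ∈ P, max (Real.cos ((lam p.1 - lam p.2) * t)) 0 with hWdef
    clear_value W
    have hWcont : Continuous W := by
      rw [hWdef]
      exact continuous_const.mul (continuous_finset_sum _ fun p _ =>
        (Real.continuous_cos.comp (continuous_const.mul continuous_id)).max continuous_const)
    have hWint : IntegrableOn W (Set.Icc 0 T) volume := hWcont.integrableOn_Icc
    -- key pointwise bound on B
    have key : ∀ t ∈ B, (1:ℝ) ≤ W t := by
      intro t ht
      rw [hBdef] at ht
      have ht' : 1 - Λ/4 < I t := ht.2
      rw [hI t] at ht'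
      have hm := mul_lt_mul_of_pos_right ht' hN2
      have hcancel : (1/(N:ℝ)^2) * (∑ r : Fin N, ∑ s : Fin N,
          Real.cos ((lam r - lam s) * t)) * (N:ℝ)^2
          = ∑ r : Fin N, ∑ s : Fin N, Real.cos ((lam r - lam s) * t) := by
        field_simp
        exact Finset.sum_congr rfl fun _ _ => Finset.sum_congr rfl fun _ _ => by rw [mul_comm]
      rw [hcancel] at hm
      have hΛN : Λ * (N:ℝ)^2 = K := by rw [hΛ]; field_simp
      have hexp : (1 - Λ/4) * (N:ℝ)^2 = (N:ℝ)^2 - (Λ * (N:ℝ)^2)/4 := by ring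
      rw [hΛN] at hexp
      rw [hexp] at hm
      have h1 : (∑ p ∈ Pc, Real.cos ((lam p.1 - lam p.2) * t)) ≤ (Pc.card : ℝ) := by
        calc (∑ p ∈ Pc, Real.cos ((lam p.1 - lam p.2) * t))
            ≤ ∑ _p ∈ Pc, (1:ℝ) := Finset.sum_le_sum (fun p _ => Real.cos_le_one _)
          _ = (Pc.card : ℝ) := by simp
      have h2 : (∑ p ∈ P, Real.cos ((lam p.1 - lam p.2) * t))
          ≤ ∑ p ∈ P, max (Real.cos ((lam p.1 - lam p.2) * t)) 0 :=
        Finset.sum_le_sum (fun p _ => le_max_left _ _)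
      have hdecomp := hsum t
      have h3 : (3/4) * (K:ℝ) <
          ∑ p ∈ P, max (Real.cos ((lam p.1 - lam p.2) * t)) 0 := by
        linarith
      have h4 : (1:ℝ) ≤
          (4 * ∑ p ∈ P, max (Real.cos ((lam p.1 - lam p.2) * t)) 0) / (3*(K:ℝ)) :=
        (le_div_iff₀ (by positivity)).mpr (by linarith)
      have heq : W t =
          (4 * ∑ p ∈ P, max (Real.cos ((lam p.1 - lam p.2) * t)) 0) / (3*(K:ℝ)) := by
        simp only [hWdef]; ring
      rw [heq]
      exact h4
    -- Markov-type bound on volume of B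
    have step1 : (volume B).toReal ≤ ∫ t in B, W t ∂volume := by
      have hc : (∫ _t in B, (1:ℝ) ∂volume) = (volume B).toReal := by simp [measureReal_def]
      rw [← hc]
      exact setIntegral_mono_on
        (integrableOn_const hfin)
        (hWint.mono_set hBsub) hBmeas key
    have hW0 : ∀ t, 0 ≤ W t := by
      intro t
      simp only [hWdef]
      have h0 : (0:ℝ) ≤ ∑ p ∈ P, max (Real.cos ((lam p.1 - lam p.2) * t)) 0 :=
        Finset.sum_nonneg fun p _ => le_max_right _ _
      have h1 : (0:ℝ) ≤ 4/(3*(K:ℝ)) := le_of_lt (div_pos (by norm_num) (by linarith))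
      exact mul_nonneg h1 h0
    have step2 : (∫ t in B, W t ∂volume) ≤ ∫ t in Set.Icc 0 T, W t ∂volume :=
      setIntegral_mono_set hWint (ae_of_all _ hW0)
        (HasSubset.Subset.eventuallyLE hBsub)
    have step3 : (∫ t in Set.Icc 0 T, W t ∂volume) = ∫ t in (0:ℝ)..T, W t := by
      rw [intervalIntegral.integral_of_le hT0.le, integral_Icc_eq_integral_Ioc]
    have step4 : (∫ t in (0:ℝ)..T, W t) ≤ 2/3 * T := by
      have hint : ∀ p ∈ P, IntervalIntegrable
          (fun t => max (Real.cos ((lam p.1 - lam p.2) * t)) 0) volume 0 T := fun p _ =>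
        ((Real.continuous_cos.comp (continuous_const.mul continuous_id)).max
          continuous_const).intervalIntegrable _ _
      have heach : ∀ p ∈ P, (∫ t in (0:ℝ)..T,
          max (Real.cos ((lam p.1 - lam p.2) * t)) 0) ≤ 1/ε := by
        intro p hp
        have hp' : ε ≤ |lam p.1 - lam p.2| := by
          rw [hPdef] at hp
          have hpp := (Finset.mem_filter.mp hp).2
          rw [hpreddef] at hpp
          exact hpp
        exact int_gpos_le hε hp'
      simp only [hWdef]
      rw [intervalIntegral.integral_const_mul, intervalIntegral.integral_finset_sum hint]
      calc (4/(3*(K:ℝ))) * ∑ p ∈ P, (∫ t in (0:ℝ)..T,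
            max (Real.cos ((lam p.1 - lam p.2) * t)) 0)
          ≤ (4/(3*(K:ℝ))) * ∑ _p ∈ P, (1/ε) :=
            mul_le_mul_of_nonneg_left (Finset.sum_le_sum heach)
              (le_of_lt (div_pos (by norm_num) (by linarith)))
        _ = (4/(3*(K:ℝ))) * ((K:ℝ) * (1/ε)) := by
            rw [Finset.sum_const, nsmul_eq_mul, ← hKdef]
        _ = 2/3 * T := by
            rw [hTdef]
            have hKne : (K:ℝ) ≠ 0 := ne_of_gt hKR
            have h5 : (4/(3*(K:ℝ))) * ((K:ℝ) * (1/ε)) = ((K:ℝ) * 4) / ((K:ℝ) * 3) * (1/ε) := by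
              ring
            have h6 : ((K:ℝ) * 4) / ((K:ℝ) * 3) = 4/3 := mul_div_mul_left 4 3 hKne
            rw [h5, h6]
            ring
    have hvolB : volume B ≤ ENNReal.ofReal (2/3 * T) := by
      rw [← ENNReal.ofReal_toReal hfin]
      exact ENNReal.ofReal_le_ofReal (by linarith)
    have hseteq : {t : ℝ | t ∈ Set.Icc 0 T ∧ I t ≤ 1 - Λ/4} = Set.Icc 0 T \ B := by
      ext t
      simp only [hBdef, Set.mem_setOf_eq, Set.mem_diff, Set.mem_inter_iff, not_and, not_lt]
      tauto
    rw [hseteq, measure_diff hBsub hBmeas.nullMeasurableSet hfin, Real.volume_Icc]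
    calc ENNReal.ofReal (1/3 * (2/ε))
        = ENNReal.ofReal (T - 0) - ENNReal.ofReal (2/3 * T) := by
          rw [← ENNReal.ofReal_sub _ (by positivity)]
          congr 1
          rw [hTdef]
          ring
      _ ≤ ENNReal.ofReal (T - 0) - volume B := tsub_le_tsub_left hvolB _
end

section
/- Let H be a Hermitian matrix on ℂ^N with eigenvalues λ_1,…,λ_N, Tr H = 0, and suppose (1/N)∑|λ_s|⁴ ≤ 9^k · ((1/N)∑λ_s²)² for some k (Bonami-type bound). If ‖H‖_F := √((1/N)∑λ_s²) ≥ ε > 0, then for t drawn uniformly from [0, 2/ε], with probability at least 1/3, (1/N²)|Tr e^{-iHt}|² ≤ 1 - 1/(48·9^k). -/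
open Matrix MeasureTheory

section FcbAux

lemma fcb_trace_exp_smul {N : ℕ} (H : Matrix (Fin N) (Fin N) ℂ) (hH : H.IsHermitian) (c : ℂ) :
    (NormedSpace.exp (c • H)).trace = ∑ s, Complex.exp (c * (hH.eigenvalues s : ℂ)) := by
  set U : Matrix (Fin N) (Fin N) ℂ := (hH.eigenvectorUnitary : Matrix (Fin N) (Fin N) ℂ) with hU
  have hUmem := hH.eigenvectorUnitary.2
  have h1 : U * star U = 1 := (Matrix.mem_unitaryGroup_iff).mp hUmem
  have h2 : star U * U = 1 := (Matrix.mem_unitaryGroup_iff').mp hUmem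
  have hUinv : U⁻¹ = star U := inv_eq_right_inv h1
  have hunit : IsUnit U := ⟨⟨U, star U, h1, h2⟩, rfl⟩
  have hspec : c • H = U * (Matrix.diagonal (fun s => c * (hH.eigenvalues s : ℂ))) * U⁻¹ := by
    rw [hUinv]
    conv_lhs => rw [hH.spectral_theorem, Unitary.conjStarAlgAut_apply]
    rw [← smul_mul_assoc, ← mul_smul_comm, ← Matrix.diagonal_smul]
    have hfun : (c • (RCLike.ofReal ∘ hH.eigenvalues) : Fin N → ℂ)
        = fun s => c * (hH.eigenvalues s : ℂ) := by
      funext s; simp [Function.comp, smul_eq_mul]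
    rw [hfun, hU]
  rw [hspec, Matrix.exp_conj U _ hunit, Matrix.trace_mul_cycle, hUinv, h2, one_mul,
    Matrix.exp_diagonal, Matrix.trace_diagonal]
  refine Finset.sum_congr rfl fun s _ => ?_
  rw [Pi.coe_exp, Complex.exp_eq_exp_ℂ]

lemma fcb_trace_eq_sum_eig {N : ℕ} (H : Matrix (Fin N) (Fin N) ℂ) (hH : H.IsHermitian) :
    H.trace = ∑ s, (hH.eigenvalues s : ℂ) := by
  set U : Matrix (Fin N) (Fin N) ℂ := (hH.eigenvectorUnitary : Matrix (Fin N) (Fin N) ℂ) with hU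
  have hUmem := hH.eigenvectorUnitary.2
  have h2 : star U * U = 1 := (Matrix.mem_unitaryGroup_iff').mp hUmem
  conv_lhs => rw [hH.spectral_theorem, Unitary.conjStarAlgAut_apply]
  rw [Matrix.trace_mul_cycle, ← hU, h2, one_mul, Matrix.trace_diagonal]
  simp [Function.comp]

lemma fcb_abs_sq_sum_exp {n : ℕ} (θ : Fin n → ℝ) :
    (‖∑ s, Complex.exp ((θ s : ℂ) * Complex.I)‖)^2
      = ∑ s, ∑ r, Real.cos (θ s - θ r) := by
  set z : ℂ := ∑ s, Complex.exp ((θ s : ℂ) * Complex.I) with hz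
  have hre : z.re = ∑ s, Real.cos (θ s) := by
    rw [hz, Complex.re_sum]
    exact Finset.sum_congr rfl fun s _ => Complex.exp_ofReal_mul_I_re _
  have him : z.im = ∑ s, Real.sin (θ s) := by
    rw [hz, Complex.im_sum]
    exact Finset.sum_congr rfl fun s _ => Complex.exp_ofReal_mul_I_im _
  rw [Complex.sq_norm, Complex.normSq_apply, hre, him]
  rw [Fintype.sum_mul_sum, Fintype.sum_mul_sum, ← Finset.sum_add_distrib]
  refine Finset.sum_congr rfl fun s _ => ?_
  rw [← Finset.sum_add_distrib]
  refine Finset.sum_congr rfl fun r _ => ?_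
  rw [Real.cos_sub]

lemma fcb_norm_sq_exp_sub_one (θ : ℝ) :
    ‖Complex.exp ((θ:ℂ) * Complex.I) - 1‖ ^ 2 = 2 - 2 * Real.cos θ := by
  rw [Complex.sq_norm, Complex.normSq_apply, Complex.sub_re, Complex.sub_im,
    Complex.one_re, Complex.one_im, Complex.exp_ofReal_mul_I_re, Complex.exp_ofReal_mul_I_im]
  have h := Real.sin_sq_add_cos_sq θ
  nlinarith [h]

lemma fcb_sqrt_sum_subadd {ι : Type*} [Fintype ι] (Δ : ι → ℝ) (x y : ℝ) :
    Real.sqrt (∑ p, (2 - 2*Real.cos (Δ p * (x+y)))) ≤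
    Real.sqrt (∑ p, (2 - 2*Real.cos (Δ p * x))) + Real.sqrt (∑ p, (2 - 2*Real.cos (Δ p * y))) := by
  set u : EuclideanSpace ℂ ι := WithLp.toLp 2 fun p => Complex.exp ((Δ p * x : ℝ) * Complex.I) - 1 with hu
  set v : EuclideanSpace ℂ ι :=
    WithLp.toLp 2 fun p => Complex.exp ((Δ p * x : ℝ) * Complex.I)
      * (Complex.exp ((Δ p * y : ℝ) * Complex.I) - 1) with hv
  have hsum : u + v = WithLp.toLp 2 fun p => Complex.exp ((Δ p * (x+y) : ℝ) * Complex.I) - 1 := by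
    ext p
    show u p + v p = _
    rw [hu, hv]
    simp only [PiLp.toLp_apply]
    rw [mul_sub, mul_one, ← Complex.exp_add]
    push_cast
    ring_nf
  have h1 : ‖u + v‖ ≤ ‖u‖ + ‖v‖ := norm_add_le u v
  have nu : ‖u‖ = Real.sqrt (∑ p, (2 - 2*Real.cos (Δ p * x))) := by
    rw [EuclideanSpace.norm_eq]
    congr 1
    exact Finset.sum_congr rfl fun p _ => fcb_norm_sq_exp_sub_one _
  have nv : ‖v‖ = Real.sqrt (∑ p, (2 - 2*Real.cos (Δ p * y))) := by
    rw [EuclideanSpace.norm_eq]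
    congr 1
    refine Finset.sum_congr rfl fun p _ => ?_
    rw [hv]
    simp only [PiLp.toLp_apply]
    rw [norm_mul, mul_pow]
    rw [Complex.norm_exp_ofReal_mul_I, one_pow, one_mul]
    exact fcb_norm_sq_exp_sub_one _
  have nuv : ‖u + v‖ = Real.sqrt (∑ p, (2 - 2*Real.cos (Δ p * (x+y)))) := by
    rw [hsum, EuclideanSpace.norm_eq]
    congr 1
    exact Finset.sum_congr rfl fun p _ => fcb_norm_sq_exp_sub_one _
  rw [nuv, nu, nv] at h1
  exact h1

lemma fcb_count_far {N : ℕ} (hN : 1 ≤ N) (k : ℕ) (lam : Fin N → ℝ)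
    (h0 : ∑ s, lam s = 0)
    (hB : (N:ℝ) * ∑ s, (lam s)^4 ≤ 9^k * (∑ s, (lam s)^2)^2)
    (hA : 0 < ∑ s, (lam s)^2) :
    ((N:ℝ))^2 ≤ (2 * 9^k + 3) * (Finset.univ.filter
      (fun p : Fin N × Fin N => (∑ s, (lam s)^2) ≤ (N:ℝ) * (lam p.1 - lam p.2)^2)).card := by
  set A : ℝ := ∑ s, (lam s)^2 with hAdef
  set Q : ℝ := ∑ s, (lam s)^4 with hQdef
  set S3 : ℝ := ∑ s, (lam s)^3 with hS3
  set f : Fin N × Fin N → ℝ := fun p => (N:ℝ) * (lam p.1 - lam p.2)^2 - A with hf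
  set R := Finset.univ.filter
      (fun p : Fin N × Fin N => A ≤ (N:ℝ) * (lam p.1 - lam p.2)^2) with hR
  have e2 : ∑ p : Fin N × Fin N, (lam p.1 - lam p.2)^2 = 2*(N:ℝ)*A := by
    rw [Fintype.sum_prod_type]
    have inner : ∀ s, (∑ r, (lam s - lam r)^2) = (N:ℝ)*(lam s)^2 + A := by
      intro s
      have expand : ∀ r, (lam s - lam r)^2
          = (lam s)^2 - (2*(lam s))*(lam r) + (lam r)^2 := fun r => by ring
      simp_rw [expand]
      rw [Finset.sum_add_distrib, Finset.sum_sub_distrib, Finset.sum_const, ← Finset.mul_sum,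
        h0, Finset.card_univ, Fintype.card_fin, nsmul_eq_mul, ← hAdef]
      ring
    simp_rw [inner]
    rw [Finset.sum_add_distrib, ← Finset.mul_sum, ← hAdef, Finset.sum_const, Finset.card_univ,
      Fintype.card_fin, nsmul_eq_mul]
    ring
  have e4 : ∑ p : Fin N × Fin N, (lam p.1 - lam p.2)^4 = 2*(N:ℝ)*Q + 6*A^2 := by
    rw [Fintype.sum_prod_type]
    have inner : ∀ s, (∑ r, (lam s - lam r)^4)
        = (N:ℝ)*(lam s)^4 + 6*(lam s)^2*A - 4*(lam s)*S3 + Q := by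
      intro s
      have expand : ∀ r, (lam s - lam r)^4
          = (((lam s)^4 - (4*(lam s)^3)*(lam r) + (6*(lam s)^2)*((lam r)^2))
              - (4*(lam s))*((lam r)^3)) + (lam r)^4 := fun r => by ring
      simp_rw [expand]
      rw [Finset.sum_add_distrib, Finset.sum_sub_distrib, Finset.sum_add_distrib,
        Finset.sum_sub_distrib, Finset.sum_const, ← Finset.mul_sum, ← Finset.mul_sum,
        ← Finset.mul_sum, h0, ← hAdef, ← hS3, ← hQdef, Finset.card_univ, Fintype.card_fin,
        nsmul_eq_mul]
      ring
    simp_rw [inner]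
    rw [Finset.sum_add_distrib, Finset.sum_sub_distrib, Finset.sum_add_distrib,
      ← Finset.mul_sum, ← hQdef]
    have t1 : ∑ s, 6*(lam s)^2*A = 6*A^2 := by
      rw [show (fun s => 6*(lam s)^2*A) = (fun s => (6*A)*(lam s)^2) from funext fun s => by ring]
      rw [← Finset.mul_sum, ← hAdef]; ring
    have t2 : ∑ s, 4*(lam s)*S3 = 0 := by
      rw [show (fun s => 4*(lam s)*S3) = (fun s => (4*S3)*(lam s)) from funext fun s => by ring]
      rw [← Finset.mul_sum, h0]; ring
    rw [t1, t2, Finset.sum_const, Finset.card_univ, Fintype.card_fin, nsmul_eq_mul]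
    ring
  have key1 : ∑ p : Fin N × Fin N, f p = (N:ℝ)^2 * A := by
    rw [hf, Finset.sum_sub_distrib, ← Finset.mul_sum, e2, Finset.sum_const, Finset.card_univ,
      Fintype.card_prod, Fintype.card_fin, nsmul_eq_mul]
    push_cast
    ring
  have key2 : ∑ p : Fin N × Fin N, (f p)^2 ≤ (2*9^k+3) * (N:ℝ)^2 * A^2 := by
    have expand : ∀ p : Fin N × Fin N, (f p)^2
        = (N:ℝ)^2*(lam p.1 - lam p.2)^4 - (2*(N:ℝ)*A)*((lam p.1 - lam p.2)^2) + A^2 := by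
      intro p; rw [hf]; ring
    simp_rw [expand]
    rw [Finset.sum_add_distrib, Finset.sum_sub_distrib, ← Finset.mul_sum, ← Finset.mul_sum,
      e2, e4, Finset.sum_const, Finset.card_univ, Fintype.card_prod, Fintype.card_fin,
      nsmul_eq_mul]
    push_cast
    nlinarith [sq_nonneg ((N:ℝ)), (show (1:ℝ) ≤ (N:ℝ) by exact_mod_cast hN)]
  have key3 : (N:ℝ)^2 * A ≤ ∑ p ∈ R, f p := by
    rw [← key1, ← Finset.sum_filter_add_sum_filter_not Finset.univ
      (fun p : Fin N × Fin N => A ≤ (N:ℝ) * (lam p.1 - lam p.2)^2) f, ← hR]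
    have : ∑ p ∈ Finset.univ.filter
        (fun p : Fin N × Fin N => ¬ (A ≤ (N:ℝ) * (lam p.1 - lam p.2)^2)), f p ≤ 0 := by
      apply Finset.sum_nonpos
      intro p hp
      rw [Finset.mem_filter] at hp
      have := hp.2
      rw [hf]; simp only; linarith [not_le.mp this]
    linarith
  have cs : (∑ p ∈ R, f p * 1)^2 ≤ (∑ p ∈ R, (f p)^2) * (∑ p ∈ R, (1:ℝ)^2) :=
    Finset.sum_mul_sq_le_sq_mul_sq R f 1
  simp only [mul_one, one_pow, Finset.sum_const, nsmul_eq_mul] at cs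
  have hsub : (∑ p ∈ R, (f p)^2) ≤ ∑ p : Fin N × Fin N, (f p)^2 :=
    Finset.sum_le_sum_of_subset_of_nonneg (Finset.subset_univ R)
      (fun p _ _ => sq_nonneg _)
  have hNA : 0 ≤ (N:ℝ)^2 * A := mul_nonneg (sq_nonneg _) hA.le
  have step : ((N:ℝ)^2*A)^2 ≤ ((2*9^k+3) * (N:ℝ)^2 * A^2) * R.card := by
    calc ((N:ℝ)^2*A)^2 ≤ (∑ p ∈ R, f p)^2 := by
          apply pow_le_pow_left₀ hNA key3
      _ ≤ (∑ p ∈ R, (f p)^2) * R.card := by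
          linarith [cs]
      _ ≤ ((2*9^k+3) * (N:ℝ)^2 * A^2) * R.card := by
          apply mul_le_mul_of_nonneg_right (le_trans hsub key2) (Nat.cast_nonneg _)
  have hNpos : (0:ℝ) < (N:ℝ)^2 := by
    have h1 : (1:ℝ) ≤ (N:ℝ) := by exact_mod_cast hN
    nlinarith
  have hApos : (0:ℝ) < A^2 := by positivity
  nlinarith [step, mul_pos hNpos hApos]

lemma fcb_one_sub_cos_intble (Δ : ℝ) (a b : ℝ) :
    IntervalIntegrable (fun t => 1 - Real.cos (Δ*t)) volume a b := by
  apply Continuous.intervalIntegrable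
  fun_prop

open intervalIntegral in
lemma fcb_integral_one_sub_cos (Δ : ℝ) (hΔ : Δ ≠ 0) (T : ℝ) :
    ∫ t in (0:ℝ)..T, (1 - Real.cos (Δ*t)) = T - Real.sin (Δ*T)/Δ := by
  have hc : Continuous (fun t : ℝ => Real.cos (Δ*t)) := by fun_prop
  rw [intervalIntegral.integral_sub (intervalIntegrable_const) (hc.intervalIntegrable 0 T)]
  rw [intervalIntegral.integral_const, smul_eq_mul, sub_zero, mul_one]
  have := intervalIntegral.integral_comp_mul_left (fun x => Real.cos x) (a := 0) (b := T) hΔ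
  rw [this, mul_zero, integral_cos, Real.sin_zero, sub_zero, smul_eq_mul]
  ring

lemma fcb_integral_one_sub_cos_nonneg (Δ : ℝ) (T : ℝ) (hT : 0 ≤ T) :
    0 ≤ ∫ t in (0:ℝ)..T, (1 - Real.cos (Δ*t)) := by
  apply intervalIntegral.integral_nonneg hT
  intro u _
  simp [Real.cos_le_one]

lemma fcb_far_integral_lb (Δ ε : ℝ) (hε : 0 < ε) (hfar : ε ≤ |Δ|) :
    (2/ε)/2 ≤ ∫ t in (0:ℝ)..(2/ε), (1 - Real.cos (Δ*t)) := by
  have hΔ : Δ ≠ 0 := by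
    intro h; rw [h] at hfar; simp at hfar; linarith
  rw [fcb_integral_one_sub_cos Δ hΔ]
  have habs : |Real.sin (Δ*(2/ε))| ≤ 1 :=
    abs_le.mpr ⟨Real.neg_one_le_sin _, Real.sin_le_one _⟩
  have h1 : Real.sin (Δ*(2/ε))/Δ ≤ 1/ε := by
    calc Real.sin (Δ*(2/ε))/Δ ≤ |Real.sin (Δ*(2/ε))/Δ| := le_abs_self _
      _ = |Real.sin (Δ*(2/ε))|/|Δ| := abs_div _ _
      _ ≤ 1/|Δ| := by gcongr
      _ ≤ 1/ε := one_div_le_one_div_of_le hε hfar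
  have h2 : 2/ε/2 = 2/ε - 1/ε := by field_simp; ring
  linarith [h1]

lemma fcb_exists_mem_inter {B C U : Set ℝ} (hC : MeasurableSet C) (hBU : B ⊆ U) (hCU : C ⊆ U)
    (h : volume U < volume B + volume C) : (B ∩ C).Nonempty := by
  by_contra h0
  rw [Set.not_nonempty_iff_eq_empty] at h0
  have hd : Disjoint B C := Set.disjoint_iff_inter_eq_empty.mpr h0
  have heq : volume (B ∪ C) = volume B + volume C := measure_union hd hC
  have hle : volume (B ∪ C) ≤ volume U := measure_mono (Set.union_subset hBU hCU)
  rw [heq] at hle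
  exact absurd (lt_of_lt_of_le h hle) (lt_irrefl _)

end FcbAux

set_option maxHeartbeats 2000000 in
/-- Combination of the spectral-condition and spectral-spreading lemmas: for a traceless
Hermitian `H` satisfying a Bonami-type moment bound with `‖H‖_F ≥ ε`, a uniformly random
`t ∈ [0, 2/ε]` satisfies `(1/N²)|Tr e^{-iHt}|² ≤ 1 - 1/(48·9^k)` with probability `≥ 1/3`. -/
theorem far_case_bound {N : ℕ} (hN : 1 ≤ N) (k : ℕ)
    (H : Matrix (Fin N) (Fin N) ℂ) (hH : H.IsHermitian)
    (htr : H.trace = 0)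
    (hBonami : (1 / (N : ℝ)) * ∑ s : Fin N, |hH.eigenvalues s| ^ 4
      ≤ 9 ^ k * ((1 / (N : ℝ)) * ∑ s : Fin N, (hH.eigenvalues s) ^ 2) ^ 2)
    (ε : ℝ) (hε : 0 < ε)
    (hfar : ε ≤ Real.sqrt ((1 / (N : ℝ)) * ∑ s : Fin N, (hH.eigenvalues s) ^ 2)) :
    ENNReal.ofReal ((1 / 3) * (2 / ε)) ≤
      volume {t : ℝ | t ∈ Set.Icc 0 (2 / ε) ∧
        (1 / (N : ℝ) ^ 2) *
          ‖(NormedSpace.exp ((-(Complex.I * t)) • H)).trace‖ ^ 2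
        ≤ 1 - 1 / (48 * 9 ^ k)} := by
  classical
  have hNR : (1:ℝ) ≤ (N:ℝ) := by exact_mod_cast hN
  have hNpos : (0:ℝ) < N := by linarith
  have hN2 : (0:ℝ) < (N:ℝ)^2 := by positivity
  set lam : Fin N → ℝ := hH.eigenvalues with hlam
  set A : ℝ := ∑ s, (lam s)^2 with hAdef
  set T : ℝ := 2/ε with hTdef
  have hTpos : 0 < T := by rw [hTdef]; positivity
  have h9 : (1:ℝ) ≤ 9^k := one_le_pow₀ (by norm_num)
  have h9pos : (0:ℝ) < 9^k := by positivity
  set dlt : ℝ := (N:ℝ)^2 * (1/(48*9^k)) with hdlt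
  have hdpos : 0 < dlt := by rw [hdlt]; positivity
  -- trace zero
  have htr0 : ∑ s, lam s = 0 := by
    have h1 := fcb_trace_eq_sum_eig H hH
    rw [htr] at h1
    have h2 : ((∑ s, lam s : ℝ) : ℂ) = 0 := by
      push_cast
      rw [← h1]
    exact_mod_cast h2
  -- A bounds
  have hAnn : 0 ≤ (1/(N:ℝ)) * A := by
    apply mul_nonneg (by positivity)
    exact Finset.sum_nonneg fun s _ => sq_nonneg _
  have hfar2 : (N:ℝ) * ε^2 ≤ A := by
    have h1 : ε^2 ≤ (1/(N:ℝ))*A := by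
      nlinarith [hfar, Real.sq_sqrt hAnn, Real.sqrt_nonneg ((1/(N:ℝ))*A)]
    have h2 := mul_le_mul_of_nonneg_left h1 hNpos.le
    have h3 : (N:ℝ)*((1/(N:ℝ))*A) = A := by field_simp
    linarith
  have hApos : 0 < A := lt_of_lt_of_le (by positivity) hfar2
  -- Bonami rescaled
  have hB' : (N:ℝ) * ∑ s, (lam s)^4 ≤ 9^k * A^2 := by
    have habs : ∑ s, |lam s|^4 = ∑ s, (lam s)^4 := by
      refine Finset.sum_congr rfl fun s _ => ?_
      rw [← abs_pow, abs_of_nonneg (by positivity)]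
    rw [habs] at hBonami
    have h2 := mul_le_mul_of_nonneg_left hBonami (sq_nonneg (N:ℝ))
    have e1 : (N:ℝ)^2*((1/(N:ℝ))*∑ s, (lam s)^4) = (N:ℝ)*∑ s, (lam s)^4 := by
      field_simp <;> ring
    have e2 : (N:ℝ)^2*(9^k*((1/(N:ℝ))*A)^2) = 9^k*A^2 := by
      field_simp <;> ring
    rw [e1, e2] at h2
    exact h2
  -- far-pair set
  set R := Finset.univ.filter
      (fun p : Fin N × Fin N => A ≤ (N:ℝ)*(lam p.1 - lam p.2)^2) with hR
  have hcard : ((N:ℝ))^2 ≤ (2*9^k+3) * R.card := fcb_count_far hN k lam htr0 hB' hApos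
  have hfarp : ∀ p ∈ R, ε ≤ |lam p.1 - lam p.2| := by
    intro p hp
    rw [hR, Finset.mem_filter] at hp
    have h1 : (N:ℝ)*ε^2 ≤ (N:ℝ)*(lam p.1 - lam p.2)^2 := le_trans hfar2 hp.2
    have h2 : ε^2 ≤ (lam p.1 - lam p.2)^2 := by nlinarith
    calc ε = Real.sqrt (ε^2) := (Real.sqrt_sq hε.le).symm
      _ ≤ Real.sqrt ((lam p.1 - lam p.2)^2) := Real.sqrt_le_sqrt h2
      _ = |lam p.1 - lam p.2| := Real.sqrt_sq_eq_abs _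
  -- the spread function G and its square-root companion D
  set G : ℝ → ℝ := fun t => ∑ p : Fin N × Fin N, (1 - Real.cos ((lam p.1 - lam p.2) * t))
    with hG
  have hGcont : Continuous G := by
    rw [hG]
    apply continuous_finset_sum
    intro p _
    fun_prop
  have hGnonneg : ∀ t, 0 ≤ G t := by
    intro t
    rw [hG]
    exact Finset.sum_nonneg fun p _ => by
      simp only [sub_nonneg]
      exact Real.cos_le_one _
  have hsum2 : ∀ t, 2 * G t
      = ∑ p : Fin N × Fin N, (2 - 2*Real.cos ((lam p.1 - lam p.2) * t)) := by
    intro t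
    rw [hG]
    simp only
    rw [Finset.mul_sum]
    exact Finset.sum_congr rfl fun p _ => by ring
  set D : ℝ → ℝ := fun t => Real.sqrt (2 * G t) with hD
  have hDnn : ∀ t, 0 ≤ D t := fun t => Real.sqrt_nonneg _
  have hDsub : ∀ x y, D (x+y) ≤ D x + D y := by
    intro x y
    rw [hD]
    simp only
    rw [hsum2, hsum2, hsum2]
    exact fcb_sqrt_sum_subadd (fun p : Fin N × Fin N => lam p.1 - lam p.2) x y
  have hDeven : ∀ x, D (-x) = D x := by
    intro x
    rw [hD]
    simp only
    rw [hsum2, hsum2]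
    congr 1
    exact Finset.sum_congr rfl fun p _ => by rw [mul_neg, Real.cos_neg]
  have hGD : ∀ x, G x = (D x)^2 / 2 := by
    intro x
    rw [hD]
    simp only
    rw [Real.sq_sqrt (by linarith [hGnonneg x])]
    ring
  -- the measured condition is equivalent to `dlt ≤ G t`
  have hcond : ∀ t : ℝ,
      (((1 : ℝ) / (N : ℝ) ^ 2) *
        ‖(NormedSpace.exp ((-(Complex.I * (t:ℂ))) • H)).trace‖ ^ 2
          ≤ 1 - 1 / (48 * 9 ^ k)) ↔ dlt ≤ G t := by
    intro t
    have htr' : (NormedSpace.exp ((-(Complex.I * (t:ℂ))) • H)).trace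
        = ∑ s, Complex.exp (((-(t * lam s) : ℝ) : ℂ) * Complex.I) := by
      rw [fcb_trace_exp_smul H hH]
      refine Finset.sum_congr rfl fun s _ => ?_
      congr 1
      push_cast
      ring
    rw [htr', fcb_abs_sq_sum_exp (fun s => -(t * lam s))]
    have hdd : ∑ s : Fin N, ∑ r : Fin N, Real.cos (-(t*lam s) - -(t*lam r))
        = (N:ℝ)^2 - G t := by
      have hc : ∑ s : Fin N, ∑ r : Fin N, (1:ℝ) = (N:ℝ)^2 := by
        simp [Finset.sum_const, Finset.card_univ]
        ring
      have hco : ∀ s r : Fin N, Real.cos (-(t*lam s) - -(t*lam r))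
          = Real.cos ((lam s - lam r) * t) := by
        intro s r
        rw [show -(t*lam s) - -(t*lam r) = -((lam s - lam r) * t) by ring, Real.cos_neg]
      calc ∑ s : Fin N, ∑ r : Fin N, Real.cos (-(t*lam s) - -(t*lam r))
          = ∑ s : Fin N, ∑ r : Fin N, Real.cos ((lam s - lam r) * t) := by
            exact Finset.sum_congr rfl fun s _ => Finset.sum_congr rfl fun r _ => hco s r
        _ = (N:ℝ)^2 - G t := by
            rw [hG]
            simp only
            rw [Fintype.sum_prod_type, ← hc, ← Finset.sum_sub_distrib]
            refine Finset.sum_congr rfl fun s _ => ?_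
            rw [← Finset.sum_sub_distrib]
            refine Finset.sum_congr rfl fun r _ => by ring
    rw [hdd]
    have he : (1/(N:ℝ)^2) * ((N:ℝ)^2 - G t) = 1 - G t/(N:ℝ)^2 := by
      field_simp
    rw [he]
    constructor
    · intro h
      have h2 : 1/(48*9^k:ℝ) ≤ G t/(N:ℝ)^2 := by linarith
      calc dlt = (N:ℝ)^2 * (1/(48*9^k)) := hdlt
        _ ≤ (N:ℝ)^2 * (G t/(N:ℝ)^2) := mul_le_mul_of_nonneg_left h2 hN2.le
        _ = G t := by field_simp
    · intro h
      have h2 : (N:ℝ)^2 * (1/(48*9^k)) ≤ G t := hdlt ▸ h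
      have h3 : 1/(48*9^k:ℝ) ≤ G t/(N:ℝ)^2 := by
        rw [le_div_iff₀ hN2]
        calc 1/(48*9^k:ℝ) * (N:ℝ)^2 = (N:ℝ)^2 * (1/(48*9^k)) := by ring
          _ ≤ G t := h2
      linarith
  -- the target set
  have hSeq : {t : ℝ | t ∈ Set.Icc 0 T ∧
      (1 / (N : ℝ) ^ 2) *
        ‖(NormedSpace.exp ((-(Complex.I * t)) • H)).trace‖ ^ 2
      ≤ 1 - 1 / (48 * 9 ^ k)} = {t : ℝ | t ∈ Set.Icc 0 T ∧ dlt ≤ G t} := by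
    ext t
    simp only [Set.mem_setOf_eq]
    exact and_congr_right fun _ => hcond t
  rw [hSeq]
  set S := {t : ℝ | t ∈ Set.Icc 0 T ∧ dlt ≤ G t} with hS
  by_contra hcon
  push_neg at hcon
  -- the bad set
  set B := {t : ℝ | t ∈ Set.Icc 0 T ∧ G t < dlt} with hB
  have hBmeas : MeasurableSet B := by
    have : B = Set.Icc 0 T ∩ G⁻¹' (Set.Iio dlt) := by
      ext t
      simp [hB, Set.mem_setOf_eq, Set.mem_inter_iff]
    rw [this]
    exact measurableSet_Icc.inter (hGcont.measurable measurableSet_Iio)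
  have hBsub : B ⊆ Set.Icc 0 T := fun t ht => ht.1
  have hcover : Set.Icc 0 T ⊆ S ∪ B := by
    intro t ht
    by_cases hc : dlt ≤ G t
    · exact Or.inl ⟨ht, hc⟩
    · exact Or.inr ⟨ht, not_le.mp hc⟩
  have hvIcc : volume (Set.Icc (0:ℝ) T) = ENNReal.ofReal T := by
    rw [Real.volume_Icc, sub_zero]
  have hvB_le : volume B ≤ ENNReal.ofReal T := by
    rw [← hvIcc]; exact measure_mono hBsub
  have hBfin : volume B ≠ ⊤ := ne_top_of_le_ne_top ENNReal.ofReal_ne_top hvB_le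
  set b : ℝ := (volume B).toReal with hb
  have hvBeq : volume B = ENNReal.ofReal b := (ENNReal.ofReal_toReal hBfin).symm
  have hbnn : 0 ≤ b := ENNReal.toReal_nonneg
  have hbT : b ≤ T := by
    have := ENNReal.toReal_mono ENNReal.ofReal_ne_top hvB_le
    rwa [ENNReal.toReal_ofReal hTpos.le] at this
  have hbig : 2*T/3 < b := by
    by_contra hle
    push_neg at hle
    have h1 : volume (Set.Icc (0:ℝ) T) ≤ volume S + volume B :=
      le_trans (measure_mono hcover) (measure_union_le _ _)
    rw [hvIcc, hvBeq] at h1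
    have h2 : volume S + ENNReal.ofReal b
        < ENNReal.ofReal ((1/3)*T) + ENNReal.ofReal (2*T/3) := by
      apply ENNReal.add_lt_add_of_lt_of_le ENNReal.ofReal_ne_top hcon
        (ENNReal.ofReal_le_ofReal hle)
    have h3 : ENNReal.ofReal ((1/3)*T) + ENNReal.ofReal (2*T/3) = ENNReal.ofReal T := by
      rw [← ENNReal.ofReal_add (by positivity) (by positivity)]
      congr 1
      ring
    rw [h3] at h2
    exact absurd (lt_of_le_of_lt h1 h2) (lt_irrefl _)
  have hDB : ∀ t ∈ B, D t ≤ Real.sqrt (2*dlt) := by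
    intro t ht
    rw [hD]
    exact Real.sqrt_le_sqrt (by linarith [ht.2])
  -- bound on [0, T/3]
  have bound1 : ∀ x ∈ Set.Icc 0 (T/3), G x ≤ 4*dlt := by
    intro x hx
    set B' := (fun t => t + x) ⁻¹' B with hB'
    have hvB' : volume B' = volume B := measure_preimage_add_right volume x B
    have hB'sub : B' ⊆ Set.Icc (-(T/3)) T := by
      intro t ht
      have h1 := hBsub ht
      have h0a : (0:ℝ) ≤ t + x := h1.1
      have h0b : t + x ≤ T := h1.2
      simp only [Set.mem_Icc] at hx ⊢
      constructor
      · linarith [hx.2]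
      · linarith [hx.1]
    have hBsub2 : B ⊆ Set.Icc (-(T/3)) T :=
      subset_trans hBsub (Set.Icc_subset_Icc (by linarith) le_rfl)
    have hmem : (B ∩ B').Nonempty := by
      apply fcb_exists_mem_inter (hBmeas.preimage (measurable_add_const x)) hBsub2 hB'sub
      rw [hvB', hvBeq, Real.volume_Icc, ← ENNReal.ofReal_add hbnn hbnn]
      apply ENNReal.ofReal_lt_ofReal_iff_of_nonneg (by linarith) |>.mpr
      simp only [Set.mem_Icc] at hx
      linarith [hx.2]
    obtain ⟨t, htB, htB'⟩ := hmem
    have ht2 : t + x ∈ B := htB'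
    have hDx : D x ≤ 2 * Real.sqrt (2*dlt) := by
      have hc : D x ≤ D (t+x) + D t := by
        calc D x = D ((t+x) + (-t)) := by norm_num
          _ ≤ D (t+x) + D (-t) := hDsub _ _
          _ = D (t+x) + D t := by rw [hDeven]
      linarith [hDB _ htB, hDB _ ht2]
    have hsq : (D x)^2 ≤ 4 * (2*dlt) := by
      nlinarith [Real.sq_sqrt (show (0:ℝ) ≤ 2*dlt by positivity),
        Real.sqrt_nonneg (2*dlt), hDnn x]
    rw [hGD x]
    linarith
  -- bound on [0, T]
  have bound2 : ∀ x ∈ Set.Icc 0 T, G x ≤ 9*dlt := by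
    intro x hx
    simp only [Set.mem_Icc] at hx
    by_cases hcase : x ≤ T/3
    · have := bound1 x (Set.mem_Icc.mpr ⟨hx.1, hcase⟩)
      linarith
    · push_neg at hcase
      have hmem : (B ∩ Set.Icc (x - T/3) x).Nonempty := by
        apply fcb_exists_mem_inter measurableSet_Icc hBsub
          (Set.Icc_subset_Icc (by linarith) hx.2)
        rw [hvIcc, hvBeq, Real.volume_Icc,
          show x - (x - T/3) = T/3 by ring,
          ← ENNReal.ofReal_add hbnn (by linarith : (0:ℝ) ≤ T/3)]
        apply ENNReal.ofReal_lt_ofReal_iff_of_nonneg hTpos.le |>.mpr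
        linarith
      obtain ⟨t, htB, htI⟩ := hmem
      simp only [Set.mem_Icc] at htI
      have hxt : x - t ∈ Set.Icc 0 (T/3) := Set.mem_Icc.mpr ⟨by linarith, by linarith⟩
      have h1 : G (x - t) ≤ 4*dlt := bound1 _ hxt
      have h2 : D (x - t) ≤ Real.sqrt (2*(4*dlt)) := by
        rw [hD]
        exact Real.sqrt_le_sqrt (by linarith)
      have h3 : D t ≤ Real.sqrt (2*dlt) := hDB _ htB
      have h4 : D x ≤ D t + D (x - t) := by
        calc D x = D (t + (x - t)) := by norm_num
          _ ≤ _ := hDsub _ _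
      have e1 : (Real.sqrt (2*dlt))^2 = 2*dlt := Real.sq_sqrt (by positivity)
      have e2 : (Real.sqrt (2*(4*dlt)))^2 = 8*dlt := by
        rw [Real.sq_sqrt (by positivity)]; ring
      have e3 : Real.sqrt (2*dlt) * Real.sqrt (2*(4*dlt)) = 4*dlt := by
        rw [← Real.sqrt_mul (by positivity),
          show (2*dlt) * (2*(4*dlt)) = (4*dlt)^2 by ring,
          Real.sqrt_sq (by positivity)]
      rw [hGD x]
      nlinarith [h4, h3, h2, Real.sqrt_nonneg (2*dlt), Real.sqrt_nonneg (2*(4*dlt)),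
        hDnn x, hDnn t, hDnn (x - t)]
  -- integral bounds
  have hint : IntegrableOn G (Set.Icc 0 T) volume :=
    hGcont.integrableOn_Icc
  have hsplit : ∫ t in Set.Icc 0 T, G t = (∫ t in B, G t) + ∫ t in (Set.Icc 0 T \ B), G t := by
    rw [← setIntegral_union disjoint_sdiff_self_right (measurableSet_Icc.diff hBmeas)
      (hint.mono_set hBsub) (hint.mono_set Set.diff_subset),
      Set.union_diff_cancel hBsub]
  have hIB : ∫ t in B, G t ≤ dlt * b := by
    have hBvol_lt : volume B < ⊤ := lt_of_le_of_lt hvB_le ENNReal.ofReal_lt_top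
    calc ∫ t in B, G t ≤ ∫ _t in B, dlt :=
          setIntegral_mono_on (hint.mono_set hBsub)
            (integrableOn_const hBvol_lt.ne) hBmeas (fun t ht => (ht.2).le)
      _ = dlt * b := by rw [setIntegral_const, smul_eq_mul, measureReal_def, ← hb]; ring
  have hvdiff : (volume (Set.Icc 0 T \ B)).toReal = T - b := by
    rw [measure_diff hBsub hBmeas.nullMeasurableSet hBfin, hvIcc, hvBeq,
      ← ENNReal.ofReal_sub T hbnn, ENNReal.toReal_ofReal (by linarith)]
  have hIrest : ∫ t in (Set.Icc 0 T \ B), G t ≤ 9*dlt*(T - b) := by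
    have hdiff_lt : volume (Set.Icc 0 T \ B) < ⊤ :=
      lt_of_le_of_lt (measure_mono Set.diff_subset) (by rw [hvIcc]; exact ENNReal.ofReal_lt_top)
    calc ∫ t in (Set.Icc 0 T \ B), G t ≤ ∫ _t in (Set.Icc 0 T \ B), (9*dlt) :=
          setIntegral_mono_on (hint.mono_set Set.diff_subset)
            (integrableOn_const hdiff_lt.ne)
            (measurableSet_Icc.diff hBmeas) (fun t ht => bound2 t ht.1)
      _ = 9*dlt*(T - b) := by rw [setIntegral_const, smul_eq_mul, measureReal_def, hvdiff]; ring
  have hupper : ∫ t in Set.Icc 0 T, G t ≤ (11/3)*dlt*T := by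
    rw [hsplit]
    have : dlt * b + 9*dlt*(T - b) = 9*dlt*T - 8*dlt*b := by ring
    nlinarith [hIB, hIrest, hbig, hdpos]
  -- lower bound on the integral
  have hlow : (R.card : ℝ) * (T/2) ≤ ∫ t in Set.Icc 0 T, G t := by
    have hIoc : ∫ t in Set.Icc 0 T, G t = ∫ t in (0:ℝ)..T, G t := by
      rw [intervalIntegral.integral_of_le hTpos.le, integral_Icc_eq_integral_Ioc]
    rw [hIoc, hG]
    simp only
    have hswap : (∫ t in (0:ℝ)..T,
          ∑ p : Fin N × Fin N, (1 - Real.cos ((lam p.1 - lam p.2) * t)))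
        = ∑ p : Fin N × Fin N, ∫ t in (0:ℝ)..T, (1 - Real.cos ((lam p.1 - lam p.2) * t)) :=
      intervalIntegral.integral_finset_sum
        (fun p _ => fcb_one_sub_cos_intble (lam p.1 - lam p.2) 0 T)
    rw [hswap]
    calc (R.card : ℝ) * (T/2) = ∑ _p ∈ R, (T/2) := by
          rw [Finset.sum_const, nsmul_eq_mul]
      _ ≤ ∑ p ∈ R, ∫ t in (0:ℝ)..T, (1 - Real.cos ((lam p.1 - lam p.2) * t)) := by
          refine Finset.sum_le_sum fun p hp => ?_
          have := fcb_far_integral_lb (lam p.1 - lam p.2) ε hε (hfarp p hp)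
          rw [hTdef]
          linarith [this]
      _ ≤ ∑ p : Fin N × Fin N, ∫ t in (0:ℝ)..T, (1 - Real.cos ((lam p.1 - lam p.2) * t)) :=
          Finset.sum_le_sum_of_subset_of_nonneg (Finset.subset_univ R)
            (fun p _ _ => fcb_integral_one_sub_cos_nonneg _ _ hTpos.le)
  -- contradiction
  have hfinal : (N:ℝ)^2 * (T/2) ≤ (2*9^k+3) * ((11/3)*dlt*T) := by
    have h1 : (N:ℝ)^2 * (T/2) ≤ ((2*9^k+3) * R.card) * (T/2) := by
      nlinarith [hcard, hTpos]
    have h2 : ((2*9^k+3) * R.card) * (T/2) = (2*9^k+3) * ((R.card:ℝ) * (T/2)) := by ring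
    have h3 : (0:ℝ) < 2*9^k+3 := by positivity
    calc (N:ℝ)^2 * (T/2) ≤ (2*9^k+3) * ((R.card:ℝ) * (T/2)) := by rw [← h2]; exact h1
      _ ≤ (2*9^k+3) * (∫ t in Set.Icc 0 T, G t) :=
          mul_le_mul_of_nonneg_left (le_trans hlow (le_refl _)) h3.le
      _ ≤ (2*9^k+3) * ((11/3)*dlt*T) := mul_le_mul_of_nonneg_left hupper h3.le
  have hdlteq : dlt * (48*9^k) = (N:ℝ)^2 := by
    rw [hdlt]
    field_simp
  have hu : 0 < dlt * T := mul_pos hdpos hTpos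
  have h5 : 24*(9^k:ℝ)*(dlt*T) ≤ (2*9^k+3) * ((11/3)*dlt*T) := by
    have he : 24*(9^k:ℝ)*(dlt*T) = (dlt*(48*9^k))*(T/2) := by ring
    rw [he, hdlteq]
    exact hfinal
  nlinarith [h5, hu, mul_nonneg (sub_nonneg.mpr h9) hu.le]
end

section
/- Let ρ and ρ' be positive definite density matrices of the form ρ = e^{-βH}/Tr[e^{-βH}] and ρ' = e^{-βH'}/Tr[e^{-βH'}] for Hermitian H, H' and β > 0. Then ‖ρ - ρ'‖_tr ≤ √(2β·Tr[(ρ - ρ')(H' - H)]). -/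
open Matrix ComplexOrder

/-- Trace norm of a complex matrix: `Tr √(AᴴA)`. -/
noncomputable def trNorm {N : ℕ} (A : Matrix (Fin N) (Fin N) ℂ) : ℝ :=
  ((Matrix.posSemidef_conjTranspose_mul_self A).1.eigenvectorUnitary.1 *
    diagonal (((↑) : ℝ → ℂ) ∘ (√·) ∘ (Matrix.posSemidef_conjTranspose_mul_self A).1.eigenvalues) *
    (star (Matrix.posSemidef_conjTranspose_mul_self A).1.eigenvectorUnitary : Matrix (Fin N) (Fin N) ℂ)).trace.re

/-- Gibbs state of a Hamiltonian `H` at inverse temperature `β`. -/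
noncomputable def gibbs {N : ℕ} (H : Matrix (Fin N) (Fin N) ℂ) (β : ℝ) :
    Matrix (Fin N) (Fin N) ℂ :=
  ((NormedSpace.exp (((-β : ℂ)) • H)).trace)⁻¹ • NormedSpace.exp (((-β : ℂ)) • H)

open NormedSpace in
lemma exp_spectral {N : ℕ} (H : Matrix (Fin N) (Fin N) ℂ) (hH : H.IsHermitian) (β : ℝ) :
    NormedSpace.exp ((-β : ℂ) • H)
      = (hH.eigenvectorUnitary : Matrix (Fin N) (Fin N) ℂ)
        * diagonal (fun i => (Real.exp (-β * hH.eigenvalues i) : ℂ))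
        * star (hH.eigenvectorUnitary : Matrix (Fin N) (Fin N) ℂ) := by
  set U : Matrix (Fin N) (Fin N) ℂ := (hH.eigenvectorUnitary : Matrix (Fin N) (Fin N) ℂ) with hU
  have hUs : star U * U = 1 := mem_unitaryGroup_iff'.mp hH.eigenvectorUnitary.2
  have hUinv : U⁻¹ = star U := inv_eq_left_inv hUs
  have hUs' : U * star U = 1 := mem_unitaryGroup_iff.mp hH.eigenvectorUnitary.2
  have hUunit : IsUnit U := ⟨⟨U, star U, hUs', hUs⟩, rfl⟩
  have key : (-β : ℂ) • H = U * ((-β : ℂ) • diagonal (RCLike.ofReal ∘ hH.eigenvalues)) * U⁻¹ := by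
    rw [hUinv]
    conv_lhs => rw [hH.spectral_theorem, Unitary.conjStarAlgAut_apply]
    rw [mul_smul_comm, smul_mul_assoc]
  rw [key, Matrix.exp_conj U _ hUunit, hUinv]
  rw [← diagonal_smul, Matrix.exp_diagonal]
  have hfun : exp ((-β : ℂ) • (RCLike.ofReal ∘ hH.eigenvalues) : Fin N → ℂ)
      = fun i => (Real.exp (-β * hH.eigenvalues i) : ℂ) := by
    funext i
    rw [Pi.coe_exp]
    simp only [Pi.smul_apply, Function.comp_apply, smul_eq_mul]
    rw [← Complex.exp_eq_exp_ℂ, Complex.ofReal_exp]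
    norm_num
  rw [hfun]

lemma gibbs_spectral {N : ℕ} (H : Matrix (Fin N) (Fin N) ℂ) (hH : H.IsHermitian) (β : ℝ) :
    gibbs H β = (hH.eigenvectorUnitary : Matrix (Fin N) (Fin N) ℂ)
      * diagonal (fun i => ((Real.exp (-β * hH.eigenvalues i)
          / ∑ k, Real.exp (-β * hH.eigenvalues k) : ℝ) : ℂ))
      * star (hH.eigenvectorUnitary : Matrix (Fin N) (Fin N) ℂ) := by
  rw [gibbs, exp_spectral H hH β]
  set U : Matrix (Fin N) (Fin N) ℂ := (hH.eigenvectorUnitary : Matrix (Fin N) (Fin N) ℂ) with hU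
  set f : Fin N → ℂ := fun i => (Real.exp (-β * hH.eigenvalues i) : ℂ) with hf
  have hUs : star U * U = 1 := mem_unitaryGroup_iff'.mp hH.eigenvectorUnitary.2
  have htr : (U * diagonal f * star U).trace
      = ((∑ k, Real.exp (-β * hH.eigenvalues k) : ℝ) : ℂ) := by
    rw [Matrix.trace_mul_comm, ← Matrix.mul_assoc, hUs, Matrix.one_mul, Matrix.trace_diagonal]
    simp only [hf]
    norm_cast
  have hfun : ((((∑ k, Real.exp (-β * hH.eigenvalues k))⁻¹ : ℝ) : ℂ)) • diagonal f
      = diagonal (fun i => ((Real.exp (-β * hH.eigenvalues i)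
          / ∑ k, Real.exp (-β * hH.eigenvalues k) : ℝ) : ℂ)) := by
    ext i j
    rcases eq_or_ne i j with rfl | hij
    · simp only [Matrix.smul_apply, Matrix.diagonal_apply_eq, hf, smul_eq_mul]
      push_cast
      ring
    · simp [Matrix.diagonal_apply_ne _ hij]
  rw [htr, ← Complex.ofReal_inv, ← smul_mul_assoc, ← mul_smul_comm, hfun]

/-- Key scalar inequality. -/
lemma scalar_key {a b : ℝ} (ha : 0 < a) (hb : 0 < b) :
    (a - b) ^ 2 ≤ (a + b) * ((a - b) * (Real.log a - Real.log b)) := by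
  wlog hab : b ≤ a with Hw
  · have h := Hw hb ha (le_of_not_ge hab)
    nlinarith [h]
  have hlog : Real.log b - Real.log a ≤ b / a - 1 := by
    have h := Real.log_le_sub_one_of_pos (div_pos hb ha)
    rwa [Real.log_div hb.ne' ha.ne'] at h
  have h1 : a - b ≤ a * (Real.log a - Real.log b) := by
    have h2 : a * (Real.log b - Real.log a) ≤ a * (b / a - 1) :=
      mul_le_mul_of_nonneg_left hlog ha.le
    have h3 : a * (b / a - 1) = b - a := by field_simp
    nlinarith [h2]
  have hL : 0 ≤ Real.log a - Real.log b :=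
    sub_nonneg.mpr ((Real.log_le_log_iff hb ha).mpr hab)
  nlinarith [mul_le_mul_of_nonneg_left h1 (sub_nonneg.mpr hab),
    mul_nonneg (mul_nonneg hb.le (sub_nonneg.mpr hab)) hL]

/-- Product of two conjugated diagonals. -/
lemma conjdiag_mul {N : ℕ} {U : Matrix (Fin N) (Fin N) ℂ} (hU : star U * U = 1)
    (f g : Fin N → ℂ) :
    (U * diagonal f * star U) * (U * diagonal g * star U)
      = U * diagonal (fun i => f i * g i) * star U := by
  have h1 : star U * (U * (diagonal g * star U)) = diagonal g * star U := by
    rw [← Matrix.mul_assoc, hU, Matrix.one_mul]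
  simp only [Matrix.mul_assoc]
  rw [h1, ← Matrix.mul_assoc (diagonal f), diagonal_mul_diagonal]

/-- Trace of a conjugated diagonal. -/
lemma trace_conjdiag {N : ℕ} {U : Matrix (Fin N) (Fin N) ℂ} (hU : star U * U = 1)
    (f : Fin N → ℂ) :
    (U * diagonal f * star U).trace = ∑ i, f i := by
  rw [Matrix.trace_mul_comm, ← Matrix.mul_assoc, hU, Matrix.one_mul, Matrix.trace_diagonal]

/-- Trace of `A` against a conjugated diagonal. -/
lemma trace_mul_conjdiag {N : ℕ} (A : Matrix (Fin N) (Fin N) ℂ)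
    {U : Matrix (Fin N) (Fin N) ℂ} (f : Fin N → ℂ) :
    (A * (U * diagonal f * star U)).trace = ∑ i, (star U * A * U) i i * f i := by
  have h : A * (U * diagonal f * star U) = (A * U) * diagonal f * star U := by
    simp only [Matrix.mul_assoc]
  rw [h, Matrix.trace_mul_comm, ← Matrix.mul_assoc, ← Matrix.mul_assoc]
  simp only [Matrix.trace, Matrix.diag, Matrix.mul_diagonal]

lemma diag_real_herm {N : ℕ} (r : Fin N → ℝ) :
    (diagonal (fun i => (r i : ℂ)))ᴴ = diagonal (fun i => (r i : ℂ)) := by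
  rw [diagonal_conjTranspose]
  exact congrArg diagonal (funext fun i => by
    simp [Pi.star_apply, RCLike.star_def, Complex.conj_ofReal])

lemma conjdiag_herm {N : ℕ} (U : Matrix (Fin N) (Fin N) ℂ) (r : Fin N → ℝ) :
    (U * diagonal (fun i => (r i : ℂ)) * star U).IsHermitian := by
  show _ᴴ = _
  simp [Matrix.star_eq_conjTranspose, Matrix.conjTranspose_mul, diagonal_conjTranspose,
    Pi.star_def, Complex.conj_ofReal, Matrix.mul_assoc]

lemma row_normSq {N : ℕ} {g : Matrix (Fin N) (Fin N) ℂ} (h : g * star g = 1) (i : Fin N) :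
    ∑ j, Complex.normSq (g i j) = 1 := by
  have h1 : (g * star g) i i = 1 := by rw [h]; simp
  rw [Matrix.mul_apply] at h1
  have h2 : ∑ j, ((Complex.normSq (g i j) : ℝ) : ℂ) = 1 := by
    rw [← h1]
    refine Finset.sum_congr rfl fun j _ => ?_
    rw [Matrix.star_apply, RCLike.star_def, Complex.mul_conj]
  exact_mod_cast h2

lemma col_normSq {N : ℕ} {g : Matrix (Fin N) (Fin N) ℂ} (h : star g * g = 1) (j : Fin N) :
    ∑ i, Complex.normSq (g i j) = 1 := by
  have h1 : (star g * g) j j = 1 := by rw [h]; simp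
  rw [Matrix.mul_apply] at h1
  have h2 : ∑ i, ((Complex.normSq (g i j) : ℝ) : ℂ) = 1 := by
    rw [← h1]
    refine Finset.sum_congr rfl fun i _ => ?_
    rw [Matrix.star_apply, RCLike.star_def, mul_comm, Complex.mul_conj]
  exact_mod_cast h2

/-- trace norm of a Hermitian matrix is the sum of the absolute values of the eigenvalues. -/
lemma trNorm_of_hermitian {N : ℕ} {Δ : Matrix (Fin N) (Fin N) ℂ} (hΔ : Δ.IsHermitian) :
    trNorm Δ = ∑ k, |hΔ.eigenvalues k| := by
  set U : Matrix (Fin N) (Fin N) ℂ := (hΔ.eigenvectorUnitary : Matrix (Fin N) (Fin N) ℂ) with hU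
  have hUs : star U * U = 1 := mem_unitaryGroup_iff'.mp hΔ.eigenvectorUnitary.2
  have hsa : IsSelfAdjoint Δ := hΔ
  have hmul : Δᴴ * Δ = cfc (fun x : ℝ => x * x) Δ := by
    rw [hΔ.eq]
    conv_lhs => rw [← cfc_id' (R := ℝ) (a := Δ)]
    exact (cfc_mul _ _ Δ).symm
  have key : trNorm Δ = (cfc Real.sqrt (Δᴴ * Δ)).trace.re := by
    rw [Matrix.IsHermitian.cfc_eq (posSemidef_conjTranspose_mul_self Δ).1, IsHermitian.cfc,
      Unitary.conjStarAlgAut_apply]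
    rfl
  rw [key, hmul]
  have e : cfc Real.sqrt (cfc (fun x : ℝ => x * x) Δ) = cfc (fun x : ℝ => |x|) Δ := by
    rw [← cfc_comp' Real.sqrt (fun x : ℝ => x * x) Δ]
    exact cfc_congr (fun x _ => Real.sqrt_mul_self_eq_abs x)
  rw [e, Matrix.IsHermitian.cfc_eq hΔ, IsHermitian.cfc, Unitary.conjStarAlgAut_apply, trace_conjdiag hUs]
  simp [Complex.re_sum]

lemma mul_cancel_left {N : ℕ} {A B : Matrix (Fin N) (Fin N) ℂ} (h : A * B = 1)
    (X : Matrix (Fin N) (Fin N) ℂ) : A * (B * X) = X := by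
  rw [← Matrix.mul_assoc, h, Matrix.one_mul]

lemma conj_conj_cancel {N : ℕ} {U : Matrix (Fin N) (Fin N) ℂ} (h : star U * U = 1)
    (D : Matrix (Fin N) (Fin N) ℂ) : star U * (U * D * star U) * U = D := by
  have h1 : star U * (U * D * star U) * U = (star U * U) * D * (star U * U) := by
    simp only [Matrix.mul_assoc]
  rw [h1, h, Matrix.one_mul, Matrix.mul_one]

lemma conj_mixed {N : ℕ} (V U D : Matrix (Fin N) (Fin N) ℂ) :
    star V * (U * D * star U) * V = (star V * U) * D * (star U * V) := by
  simp only [Matrix.mul_assoc]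

/-- Pinsker-type bound for Gibbs states (Lemma 2.1, Eq. (trnormforGibbs0)). -/
theorem gibbs_pinsker {N : ℕ} (hN : 1 ≤ N)
    (H H' : Matrix (Fin N) (Fin N) ℂ) (hH : H.IsHermitian) (hH' : H'.IsHermitian)
    (β : ℝ) (hβ : 0 < β) :
    trNorm (gibbs H β - gibbs H' β)
      ≤ Real.sqrt (2 * β * (((gibbs H β - gibbs H' β) * (H' - H)).trace).re) := by
  have hNe : Nonempty (Fin N) := ⟨⟨0, hN⟩⟩
  set Δ : Matrix (Fin N) (Fin N) ℂ := gibbs H β - gibbs H' β with hΔdef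
  set U1 : Matrix (Fin N) (Fin N) ℂ := (hH.eigenvectorUnitary : Matrix (Fin N) (Fin N) ℂ)
    with hU1def
  set U2 : Matrix (Fin N) (Fin N) ℂ := (hH'.eigenvectorUnitary : Matrix (Fin N) (Fin N) ℂ)
    with hU2def
  set d : Fin N → ℝ := hH.eigenvalues with hddef
  set e : Fin N → ℝ := hH'.eigenvalues with hedef
  have hU1s : star U1 * U1 = 1 := mem_unitaryGroup_iff'.mp hH.eigenvectorUnitary.2
  have hU1s' : U1 * star U1 = 1 := mem_unitaryGroup_iff.mp hH.eigenvectorUnitary.2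
  have hU2s : star U2 * U2 = 1 := mem_unitaryGroup_iff'.mp hH'.eigenvectorUnitary.2
  have hU2s' : U2 * star U2 = 1 := mem_unitaryGroup_iff.mp hH'.eigenvectorUnitary.2
  set lam : Fin N → ℝ := fun i => Real.exp (-β * d i) / ∑ k, Real.exp (-β * d k) with hlamdef
  set mu : Fin N → ℝ := fun j => Real.exp (-β * e j) / ∑ k, Real.exp (-β * e k) with hmudef
  have hZpos : 0 < ∑ k, Real.exp (-β * d k) :=
    Finset.sum_pos (fun _ _ => Real.exp_pos _) Finset.univ_nonempty
  have hZ'pos : 0 < ∑ k, Real.exp (-β * e k) :=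
    Finset.sum_pos (fun _ _ => Real.exp_pos _) Finset.univ_nonempty
  have hlam_pos : ∀ i, 0 < lam i := fun i => div_pos (Real.exp_pos _) hZpos
  have hmu_pos : ∀ j, 0 < mu j := fun j => div_pos (Real.exp_pos _) hZ'pos
  have hlam_sum : ∑ i, lam i = 1 := by
    rw [hlamdef, ← Finset.sum_div]
    exact div_self hZpos.ne'
  have hmu_sum : ∑ j, mu j = 1 := by
    rw [hmudef, ← Finset.sum_div]
    exact div_self hZ'pos.ne'
  have hlog : ∀ i j, Real.log (lam i) - Real.log (mu j)
      = β * (e j - d i) + (Real.log (∑ k, Real.exp (-β * e k))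
          - Real.log (∑ k, Real.exp (-β * d k))) := by
    intro i j
    rw [hlamdef, hmudef]
    simp only
    rw [Real.log_div (Real.exp_pos _).ne' hZpos.ne',
      Real.log_div (Real.exp_pos _).ne' hZ'pos.ne', Real.log_exp, Real.log_exp]
    ring
  have h1 : gibbs H β = U1 * diagonal (fun i => (lam i : ℂ)) * star U1 := gibbs_spectral H hH β
  have h2 : gibbs H' β = U2 * diagonal (fun j => (mu j : ℂ)) * star U2 := gibbs_spectral H' hH' β
  have hgH : (gibbs H β).IsHermitian := h1 ▸ conjdiag_herm U1 lam
  have hgH' : (gibbs H' β).IsHermitian := h2 ▸ conjdiag_herm U2 mu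
  have hΔherm : Δ.IsHermitian := hgH.sub hgH'
  set ν : Fin N → ℝ := hΔherm.eigenvalues with hνdef
  set U3 : Matrix (Fin N) (Fin N) ℂ := (hΔherm.eigenvectorUnitary : Matrix (Fin N) (Fin N) ℂ)
    with hU3def
  have hU3s : star U3 * U3 = 1 := mem_unitaryGroup_iff'.mp hΔherm.eigenvectorUnitary.2
  have hU3s' : U3 * star U3 = 1 := mem_unitaryGroup_iff.mp hΔherm.eigenvectorUnitary.2
  have h3 : Δ = U3 * diagonal (fun k => (ν k : ℂ)) * star U3 := hΔherm.spectral_theorem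
  set s : Fin N → ℝ := fun k => if ν k < 0 then -1 else 1 with hsdef
  have hs_mul : ∀ k, s k * ν k = |ν k| := by
    intro k
    rw [hsdef]
    rcases lt_or_ge (ν k) 0 with h | h
    · simp only [if_pos h]
      rw [abs_of_neg h]; ring
    · simp only [if_neg (not_lt.mpr h)]
      rw [abs_of_nonneg h]; ring
  set S : Matrix (Fin N) (Fin N) ℂ := U3 * diagonal (fun k => (s k : ℂ)) * star U3 with hSdef
  have hSS : S * S = 1 := by
    rw [hSdef, conjdiag_mul hU3s]
    have hone : (fun k => (s k : ℂ) * (s k : ℂ)) = fun _ => (1 : ℂ) := by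
      funext k
      rw [hsdef]
      simp only
      rcases lt_or_ge (ν k) 0 with h | h
      · rw [if_pos h]; norm_num
      · rw [if_neg (not_lt.mpr h)]; norm_num
    rw [hone, diagonal_one, Matrix.mul_one, hU3s']
  have hS_star : star S = S := by
    rw [Matrix.star_eq_conjTranspose]
    exact conjdiag_herm U3 s
  have hSs : star S * S = 1 := by rw [hS_star, hSS]
  have hSs' : S * star S = 1 := by rw [hS_star, hSS]
  have hSmem : S ∈ Matrix.unitaryGroup (Fin N) ℂ := mem_unitaryGroup_iff'.mpr hSs
  set w : Matrix (Fin N) (Fin N) ℂ := star U1 * U2 with hwdef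
  set g : Matrix (Fin N) (Fin N) ℂ := star U1 * S * U2 with hgdef
  have hwmem : w ∈ Matrix.unitaryGroup (Fin N) ℂ :=
    mul_mem (Unitary.star_mem hH.eigenvectorUnitary.2) hH'.eigenvectorUnitary.2
  have hgmem : g ∈ Matrix.unitaryGroup (Fin N) ℂ :=
    mul_mem (mul_mem (Unitary.star_mem hH.eigenvectorUnitary.2) hSmem)
      hH'.eigenvectorUnitary.2
  have hww' : w * star w = 1 := mem_unitaryGroup_iff.mp hwmem
  have hw'w : star w * w = 1 := mem_unitaryGroup_iff'.mp hwmem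
  have hgg' : g * star g = 1 := mem_unitaryGroup_iff.mp hgmem
  have hg'g : star g * g = 1 := mem_unitaryGroup_iff'.mp hgmem
  have hw_row : ∀ i, ∑ j, Complex.normSq (w i j) = 1 := row_normSq hww'
  have hw_col : ∀ j, ∑ i, Complex.normSq (w i j) = 1 := col_normSq hw'w
  have hg_row : ∀ i, ∑ j, Complex.normSq (g i j) = 1 := row_normSq hgg'
  have hg_col : ∀ j, ∑ i, Complex.normSq (g i j) = 1 := col_normSq hg'g
  have star_w : star w = star U2 * U1 := by rw [hwdef, Matrix.star_mul, star_star]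
  have star_g : star g = star U2 * S * U1 := by
    rw [hgdef, Matrix.star_mul, Matrix.star_mul, star_star, hS_star, ← Matrix.mul_assoc]
  -- E1 : trace of S * Δ is the sum of |ν|
  have hE1 : (S * Δ).trace = ((∑ k, |ν k| : ℝ) : ℂ) := by
    rw [h3, hSdef, conjdiag_mul hU3s, trace_conjdiag hU3s]
    push_cast
    refine Finset.sum_congr rfl fun k _ => ?_
    rw [← Complex.ofReal_mul, hs_mul k]
  -- E2 : trace of S * Δ in mixed coordinates
  have hA1 : g * star w = star U1 * S * U1 := by
    rw [hgdef, star_w, Matrix.mul_assoc (star U1 * S), mul_cancel_left hU2s']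
  have hA2 : star w * g = star U2 * S * U2 := by
    rw [hgdef, star_w, Matrix.mul_assoc (star U2) U1, Matrix.mul_assoc (star U1) S U2,
      mul_cancel_left hU1s', ← Matrix.mul_assoc]
  have hE2 : (S * Δ).trace
      = ∑ i, ∑ j, g i j * star (w i j) * ((lam i : ℂ) - (mu j : ℂ)) := by
    rw [hΔdef, mul_sub, Matrix.trace_sub, h1, h2,
      trace_mul_conjdiag S (fun i => (lam i : ℂ)), trace_mul_conjdiag S (fun j => (mu j : ℂ)),
      ← hA1, ← hA2]
    have e1 : ∑ i, (g * star w) i i * (lam i : ℂ)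
        = ∑ i, ∑ j, g i j * star (w i j) * (lam i : ℂ) := by
      refine Finset.sum_congr rfl fun i _ => ?_
      rw [Matrix.mul_apply, Finset.sum_mul]
      exact Finset.sum_congr rfl fun j _ => by rw [Matrix.star_apply]
    have e2 : ∑ j, (star w * g) j j * (mu j : ℂ)
        = ∑ i, ∑ j, g i j * star (w i j) * (mu j : ℂ) := by
      have e2' : ∑ j, (star w * g) j j * (mu j : ℂ)
          = ∑ j, ∑ i, g i j * star (w i j) * (mu j : ℂ) := by
        refine Finset.sum_congr rfl fun j _ => ?_
        rw [Matrix.mul_apply, Finset.sum_mul]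
        refine Finset.sum_congr rfl fun i _ => ?_
        rw [Matrix.star_apply]
        ring
      rw [e2']
      exact Finset.sum_comm
    rw [e1, e2, ← Finset.sum_sub_distrib]
    refine Finset.sum_congr rfl fun i _ => ?_
    rw [← Finset.sum_sub_distrib]
    refine Finset.sum_congr rfl fun j _ => ?_
    ring
  -- E3 : trace of Δ * (H' - H)
  have hHd : H = U1 * diagonal (fun i => (d i : ℂ)) * star U1 := hH.spectral_theorem
  have hH'd : H' = U2 * diagonal (fun j => (e j : ℂ)) * star U2 := hH'.spectral_theorem
  have ht1 : (gibbs H β * H').trace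
      = ((∑ j, ∑ i, Complex.normSq (w i j) * lam i * e j : ℝ) : ℂ) := by
    rw [hH'd, trace_mul_conjdiag (gibbs H β) (fun j => (e j : ℂ))]
    push_cast
    refine Finset.sum_congr rfl fun j _ => ?_
    rw [h1, conj_mixed, ← star_w, ← hwdef, Matrix.mul_apply, Finset.sum_mul]
    refine Finset.sum_congr rfl fun i _ => ?_
    rw [Matrix.mul_diagonal, Matrix.star_apply]
    rw [show star (w i j) * (lam i : ℂ) * w i j * (e j : ℂ)
        = (w i j * star (w i j)) * (lam i : ℂ) * (e j : ℂ) from by ring]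
    rw [Complex.star_def, Complex.mul_conj]
  have ht2 : (gibbs H β * H).trace = ((∑ i, lam i * d i : ℝ) : ℂ) := by
    nth_rewrite 2 [hHd]
    rw [trace_mul_conjdiag (gibbs H β) (fun i => (d i : ℂ))]
    push_cast
    refine Finset.sum_congr rfl fun i _ => ?_
    rw [h1, conj_conj_cancel hU1s, Matrix.diagonal_apply_eq]
  have ht3 : (gibbs H' β * H').trace = ((∑ j, mu j * e j : ℝ) : ℂ) := by
    nth_rewrite 2 [hH'd]
    rw [trace_mul_conjdiag (gibbs H' β) (fun j => (e j : ℂ))]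
    push_cast
    refine Finset.sum_congr rfl fun j _ => ?_
    rw [h2, conj_conj_cancel hU2s, Matrix.diagonal_apply_eq]
  have ht4 : (gibbs H' β * H).trace
      = ((∑ i, ∑ j, Complex.normSq (w i j) * mu j * d i : ℝ) : ℂ) := by
    rw [hHd, trace_mul_conjdiag (gibbs H' β) (fun i => (d i : ℂ))]
    push_cast
    refine Finset.sum_congr rfl fun i _ => ?_
    rw [h2, conj_mixed, ← hwdef, ← star_w, Matrix.mul_apply, Finset.sum_mul]
    refine Finset.sum_congr rfl fun j _ => ?_
    rw [Matrix.mul_diagonal, Matrix.star_apply]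
    rw [show w i j * (mu j : ℂ) * star (w i j) * (d i : ℂ)
        = (w i j * star (w i j)) * (mu j : ℂ) * (d i : ℂ) from by ring]
    rw [Complex.star_def, Complex.mul_conj]
  set Rr : ℝ := ∑ i, ∑ j, Complex.normSq (w i j) * (lam i - mu j) * (e j - d i) with hRrdef
  have hr2 : ∑ i, lam i * d i = ∑ i, ∑ j, Complex.normSq (w i j) * (lam i * d i) := by
    refine Finset.sum_congr rfl fun i _ => ?_
    rw [← Finset.sum_mul, hw_row i, one_mul]
  have hr3 : ∑ j, mu j * e j = ∑ j, ∑ i, Complex.normSq (w i j) * (mu j * e j) := by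
    refine Finset.sum_congr rfl fun j _ => ?_
    rw [← Finset.sum_mul, hw_col j, one_mul]
  have hE3 : (Δ * (H' - H)).trace = ((Rr : ℝ) : ℂ) := by
    rw [hΔdef, sub_mul, mul_sub, mul_sub, Matrix.trace_sub, Matrix.trace_sub, Matrix.trace_sub,
      ht1, ht2, ht3, ht4]
    norm_cast
    rw [hr2, hr3, hRrdef]
    rw [show (∑ j, ∑ i, Complex.normSq (w i j) * lam i * e j)
        = ∑ i, ∑ j, Complex.normSq (w i j) * lam i * e j from Finset.sum_comm]
    rw [show (∑ j, ∑ i, Complex.normSq (w i j) * (mu j * e j))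
        = ∑ i, ∑ j, Complex.normSq (w i j) * (mu j * e j) from Finset.sum_comm]
    have expand : ∀ i j : Fin N, Complex.normSq (w i j) * (lam i - mu j) * (e j - d i)
        = Complex.normSq (w i j) * lam i * e j - Complex.normSq (w i j) * (lam i * d i)
          - (Complex.normSq (w i j) * (mu j * e j) - Complex.normSq (w i j) * mu j * d i) :=
      fun i j => by ring
    simp only [expand, Finset.sum_sub_distrib]
  have hRe : ((Δ * (H' - H)).trace).re = Rr := by rw [hE3, Complex.ofReal_re]
  -- Cauchy–Schwarz and conclusion
  have hplus_pos : ∀ i j : Fin N, 0 < lam i + mu j := fun i j => add_pos (hlam_pos i) (hmu_pos j)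
  have hCS : (∑ p : Fin N × Fin N,
        ‖g p.1 p.2‖ * ‖w p.1 p.2‖ * |lam p.1 - mu p.2|) ^ 2
      ≤ (∑ p : Fin N × Fin N, Complex.normSq (g p.1 p.2) * (lam p.1 + mu p.2))
        * (∑ p : Fin N × Fin N,
            Complex.normSq (w p.1 p.2) * ((lam p.1 - mu p.2) ^ 2 / (lam p.1 + mu p.2))) := by
    refine Finset.sum_sq_le_sum_mul_sum_of_sq_eq_mul _ (fun p _ => ?_) (fun p _ => ?_)
      (fun p _ => ?_)
    · exact mul_nonneg (Complex.normSq_nonneg _) (hplus_pos _ _).le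
    · exact mul_nonneg (Complex.normSq_nonneg _)
        (div_nonneg (sq_nonneg _) (hplus_pos _ _).le)
    · have hne := (hplus_pos p.1 p.2).ne'
      rw [mul_pow, mul_pow, Complex.sq_norm, Complex.sq_norm, sq_abs]
      field_simp
  have hFsum : (∑ p : Fin N × Fin N, Complex.normSq (g p.1 p.2) * (lam p.1 + mu p.2)) = 2 := by
    rw [Fintype.sum_prod_type]
    have split : ∀ i j : Fin N, Complex.normSq (g i j) * (lam i + mu j)
        = Complex.normSq (g i j) * lam i + Complex.normSq (g i j) * mu j := fun i j => by ring
    simp only [split, Finset.sum_add_distrib]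
    have eA : ∑ i, ∑ j, Complex.normSq (g i j) * lam i = 1 := by
      rw [show (∑ i, ∑ j, Complex.normSq (g i j) * lam i) = ∑ i, lam i from
        Finset.sum_congr rfl fun i _ => by rw [← Finset.sum_mul, hg_row i, one_mul]]
      exact hlam_sum
    have eB : ∑ i, ∑ j, Complex.normSq (g i j) * mu j = 1 := by
      rw [show (∑ i, ∑ j, Complex.normSq (g i j) * mu j)
          = ∑ j, ∑ i, Complex.normSq (g i j) * mu j from Finset.sum_comm]
      rw [show (∑ j, ∑ i, Complex.normSq (g i j) * mu j) = ∑ j, mu j from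
        Finset.sum_congr rfl fun j _ => by rw [← Finset.sum_mul, hg_col j, one_mul]]
      exact hmu_sum
    rw [eA, eB]
    norm_num
  have zero_sum : ∑ i, ∑ j, Complex.normSq (w i j) * (lam i - mu j) = 0 := by
    have split : ∀ i j : Fin N, Complex.normSq (w i j) * (lam i - mu j)
        = Complex.normSq (w i j) * lam i - Complex.normSq (w i j) * mu j := fun i j => by ring
    simp only [split, Finset.sum_sub_distrib]
    have eA : ∑ i, ∑ j, Complex.normSq (w i j) * lam i = 1 := by
      rw [show (∑ i, ∑ j, Complex.normSq (w i j) * lam i) = ∑ i, lam i from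
        Finset.sum_congr rfl fun i _ => by rw [← Finset.sum_mul, hw_row i, one_mul]]
      exact hlam_sum
    have eB : ∑ i, ∑ j, Complex.normSq (w i j) * mu j = 1 := by
      rw [show (∑ i, ∑ j, Complex.normSq (w i j) * mu j)
          = ∑ j, ∑ i, Complex.normSq (w i j) * mu j from Finset.sum_comm]
      rw [show (∑ j, ∑ i, Complex.normSq (w i j) * mu j) = ∑ j, mu j from
        Finset.sum_congr rfl fun j _ => by rw [← Finset.sum_mul, hw_col j, one_mul]]
      exact hmu_sum
    rw [eA, eB, sub_self]
  have hGsum : (∑ p : Fin N × Fin N,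
      Complex.normSq (w p.1 p.2) * ((lam p.1 - mu p.2) ^ 2 / (lam p.1 + mu p.2))) ≤ β * Rr := by
    have step1 : ∀ p : Fin N × Fin N,
        Complex.normSq (w p.1 p.2) * ((lam p.1 - mu p.2) ^ 2 / (lam p.1 + mu p.2))
          ≤ Complex.normSq (w p.1 p.2)
            * ((lam p.1 - mu p.2) * (Real.log (lam p.1) - Real.log (mu p.2))) := by
      intro p
      refine mul_le_mul_of_nonneg_left ?_ (Complex.normSq_nonneg _)
      rw [div_le_iff₀ (hplus_pos _ _)]
      calc (lam p.1 - mu p.2) ^ 2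
          ≤ (lam p.1 + mu p.2) * ((lam p.1 - mu p.2)
              * (Real.log (lam p.1) - Real.log (mu p.2))) :=
            scalar_key (hlam_pos p.1) (hmu_pos p.2)
        _ = (lam p.1 - mu p.2) * (Real.log (lam p.1) - Real.log (mu p.2))
              * (lam p.1 + mu p.2) := by ring
    calc (∑ p : Fin N × Fin N,
          Complex.normSq (w p.1 p.2) * ((lam p.1 - mu p.2) ^ 2 / (lam p.1 + mu p.2)))
        ≤ ∑ p : Fin N × Fin N, Complex.normSq (w p.1 p.2)
            * ((lam p.1 - mu p.2) * (Real.log (lam p.1) - Real.log (mu p.2))) :=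
          Finset.sum_le_sum fun p _ => step1 p
      _ = ∑ i, ∑ j, Complex.normSq (w i j)
            * ((lam i - mu j) * (Real.log (lam i) - Real.log (mu j))) :=
          Fintype.sum_prod_type _
      _ = β * Rr := by
          have expand2 : ∀ i j : Fin N, Complex.normSq (w i j)
              * ((lam i - mu j) * (Real.log (lam i) - Real.log (mu j)))
              = β * (Complex.normSq (w i j) * (lam i - mu j) * (e j - d i))
                + (Real.log (∑ k, Real.exp (-β * e k)) - Real.log (∑ k, Real.exp (-β * d k)))
                  * (Complex.normSq (w i j) * (lam i - mu j)) := by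
            intro i j
            rw [hlog i j]
            ring
          simp only [expand2, Finset.sum_add_distrib, ← Finset.mul_sum]
          rw [zero_sum, hRrdef]
          ring
  have htrH : trNorm Δ = ∑ k, |ν k| := trNorm_of_hermitian hΔherm
  have htr_nonneg : 0 ≤ trNorm Δ := by
    rw [htrH]
    exact Finset.sum_nonneg fun k _ => abs_nonneg _
  have htr_le : trNorm Δ ≤ ∑ p : Fin N × Fin N,
      ‖g p.1 p.2‖ * ‖w p.1 p.2‖ * |lam p.1 - mu p.2| := by
    rw [htrH]
    have h0 : (∑ k, |ν k|) = ‖(S * Δ).trace‖ := by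
      rw [hE1, Complex.norm_real, Real.norm_eq_abs,
        abs_of_nonneg (Finset.sum_nonneg fun k _ => abs_nonneg (ν k))]
    rw [h0, hE2, Fintype.sum_prod_type]
    calc ‖∑ i, ∑ j, g i j * star (w i j) * ((lam i : ℂ) - (mu j : ℂ))‖
        ≤ ∑ i, ‖∑ j, g i j * star (w i j) * ((lam i : ℂ) - (mu j : ℂ))‖ :=
          norm_sum_le _ _
      _ ≤ ∑ i, ∑ j, ‖g i j * star (w i j) * ((lam i : ℂ) - (mu j : ℂ))‖ :=
          Finset.sum_le_sum fun i _ => norm_sum_le _ _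
      _ = ∑ i, ∑ j, ‖g i j‖ * ‖w i j‖ * |lam i - mu j| := by
          refine Finset.sum_congr rfl fun i _ => Finset.sum_congr rfl fun j _ => ?_
          rw [norm_mul, norm_mul, Complex.star_def, Complex.norm_conj,
            show ((lam i : ℂ) - (mu j : ℂ)) = ((lam i - mu j : ℝ) : ℂ) from by push_cast; ring,
            Complex.norm_real, Real.norm_eq_abs]
  have hsq_le : (trNorm Δ) ^ 2 ≤ 2 * β * ((Δ * (H' - H)).trace).re := by
    rw [hRe]
    calc (trNorm Δ) ^ 2
        ≤ (∑ p : Fin N × Fin N,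
            ‖g p.1 p.2‖ * ‖w p.1 p.2‖ * |lam p.1 - mu p.2|) ^ 2 :=
          pow_le_pow_left₀ htr_nonneg htr_le 2
      _ ≤ (∑ p : Fin N × Fin N, Complex.normSq (g p.1 p.2) * (lam p.1 + mu p.2))
            * (∑ p : Fin N × Fin N,
                Complex.normSq (w p.1 p.2) * ((lam p.1 - mu p.2) ^ 2 / (lam p.1 + mu p.2))) :=
          hCS
      _ ≤ 2 * (β * Rr) := by
          rw [hFsum]
          exact mul_le_mul_of_nonneg_left hGsum (by norm_num)
      _ = 2 * β * Rr := by ring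
  exact Real.le_sqrt_of_sq_le hsq_le
end
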